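/- arXiv:1304.2451 — 3 statements merged into one kernel-verified Lean document; each statement's English description precedes it below -/
import Mathlib

section
/- A nil Banach algebra is nilpotent: if A is a Banach algebra over ℝ or ℂ in which every element a satisfies aⁿ = 0 for some n depending on a, then there exists N such that the product of any N elements of A is zero. -/
open Filter Topology

noncomputable section

/-- The free non-unital associative algebra `F⟨X⟩` on countably many
variables `x₀, x₁, x₂, …`, realized as the semigroup algebra of the free
semigroup on `ℕ`. -/
abbrev FreeNC (F : Type*) [Field F] : Type _ := MonoidAlgebra F (FreeSemigroup ℕ)

/-- Evaluation of noncommutative polynomials: the non-unital algebra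
homomorphism `F⟨X⟩ → A` sending `xᵢ` to `v i`. -/
def evalAt {F : Type*} [Field F] {A : Type*} [NonUnitalRing A] [Module F A]
    [IsScalarTower F A A] [SMulCommClass F A A] (v : ℕ → A) :
    FreeNC F →ₙₐ[F] A :=
  MonoidAlgebra.liftMagma F (FreeSemigroup.lift v)

/-- `f ∈ F⟨X⟩` is a polynomial identity of `A` if it vanishes under every
substitution of elements of `A` for the variables. -/
def IsPolyId (F : Type*) [Field F] (A : Type*) [NonUnitalRing A] [Module F A]
    [IsScalarTower F A A] [SMulCommClass F A A] (f : FreeNC F) : Prop :=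
  ∀ v : ℕ → A, evalAt v f = 0

/-- The number of occurrences of the variable `xᵢ` in the monomial (word) `w`. -/
def degOf (w : FreeSemigroup ℕ) (i : ℕ) : ℕ := (w.head :: w.tail).count i

/- The multihomogeneous component of `f` of multidegree `d`: the sum of the
monomial terms of `f` in which `xᵢ` occurs exactly `d i` times for every `i`. -/
open scoped Classical in
def component {F : Type*} [Field F] (d : ℕ →₀ ℕ) (f : FreeNC F) : FreeNC F :=
  MonoidAlgebra.ofCoeff (Finsupp.filter (fun w => ∀ i, degOf w i = d i) f.coeff)

/-- `prodSeq f n = f 0 * f 1 * ⋯ * f n`, a product of `n + 1` elements. -/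
def prodSeq {A : Type*} [Mul A] (f : ℕ → A) : ℕ → A
  | 0 => f 0
  | n+1 => prodSeq f n * f (n+1)

/-- `word n = x₀ x₁ ⋯ xₙ`, the monomial word of length `n + 1`. -/
def word : ℕ → FreeSemigroup ℕ
  | 0 => .of 0
  | n+1 => word n * .of (n+1)

namespace G11

lemma vmem {F : Type*} [Field F] {M : Type*} [AddCommGroup M] [Module F M] (T : Submodule F M)
    {n : ℕ} (t : Fin n → F) (ht : Function.Injective t) (v : Fin n → M)
    (h : ∀ i, (∑ d : Fin n, t i ^ (d : ℕ) • v d) ∈ T) : ∀ d, v d ∈ T := by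
  classical
  set V : Matrix (Fin n) (Fin n) F := Matrix.vandermonde t with hVdef
  have hdet : IsUnit V.det := by
    rw [hVdef, Matrix.det_vandermonde]
    refine IsUnit.mk0 _ (Finset.prod_ne_zero_iff.2 fun i _ => Finset.prod_ne_zero_iff.2 fun j hj => ?_)
    exact sub_ne_zero.2 fun e => (Finset.mem_Ioi.1 hj).ne (ht e.symm)
  have hinv : V⁻¹ * V = 1 := Matrix.nonsing_inv_mul V hdet
  intro d
  have key : v d = ∑ i, (V⁻¹ d i) • (∑ e, V i e • v e) := by
    have h1 : ∀ i, (V⁻¹ d i) • (∑ e, V i e • v e) = ∑ e, (V⁻¹ d i * V i e) • v e := by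
      intro i; rw [Finset.smul_sum]; exact Finset.sum_congr rfl fun e _ => smul_smul _ _ _
    rw [Finset.sum_congr rfl fun i _ => h1 i, Finset.sum_comm]
    have h2 : ∀ e, (∑ i, (V⁻¹ d i * V i e) • v e) = ((V⁻¹ * V) d e) • v e := by
      intro e; rw [Matrix.mul_apply, Finset.sum_smul]
    rw [Finset.sum_congr rfl fun e _ => h2 e, hinv]
    simp [Matrix.one_apply]
  rw [key]
  refine Submodule.sum_mem T fun i _ => Submodule.smul_mem T _ ?_
  simpa [hVdef, Matrix.vandermonde] using h i

def fS {R : Type*} [Ring R] (n : ℕ) (x y : R) : R := ∑ i ∈ Finset.range n, x ^ i * y * x ^ (n - 1 - i)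

lemma fS_succ {R : Type*} [Ring R] (n : ℕ) (x y : R) :
    fS (n+1) x y = fS n x y * x + x ^ n * y := by
  unfold fS
  rw [Finset.sum_range_succ, Finset.sum_mul]
  congr 1
  · refine Finset.sum_congr rfl fun i hi => ?_
    have hi' : i < n := Finset.mem_range.1 hi
    have h1 : n + 1 - 1 - i = (n - 1 - i) + 1 := by omega
    rw [h1, pow_succ, ← mul_assoc]
  · have h1 : n + 1 - 1 - n = 0 := by omega
    rw [h1, pow_zero, mul_one]

lemma exists_coeffs {F : Type*} [Field F] {R : Type*} [Ring R] [Module F R]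
    [IsScalarTower F R R] [SMulCommClass F R R] (x y : R) (n : ℕ) :
    ∃ v : ℕ → R, v 0 = x ^ n ∧ v 1 = fS n x y ∧ v n = y ^ n ∧
      (∀ d, n < d → v d = 0) ∧
      ∀ t : F, (x + t • y) ^ n = ∑ d ∈ Finset.range (n+1), t ^ d • v d := by
  induction n with
  | zero =>
      refine ⟨fun d => if d = 0 then 1 else 0, by simp, by simp [fS], by simp,
        fun d hd => if_neg (by omega), fun t => by simp⟩
  | succ n ih =>
      obtain ⟨v, hv0, hv1, hvn, hvtop, hvsum⟩ := ih
      refine ⟨fun d => v d * x + if d = 0 then 0 else v (d-1) * y, ?_, ?_, ?_, ?_, ?_⟩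
      · simp [hv0, pow_succ]
      · simp only [if_neg one_ne_zero]
        rw [hv1, show (1:ℕ) - 1 = 0 from rfl, hv0, fS_succ]
      · simp only [if_neg (Nat.succ_ne_zero n)]
        rw [hvtop (n+1) (by omega), Nat.add_sub_cancel, hvn, zero_mul, zero_add, pow_succ]
      · intro d hd
        have hd0 : d ≠ 0 := by omega
        show v d * x + (if d = 0 then 0 else v (d-1) * y) = 0
        rw [hvtop d (by omega), hvtop (d-1) (by omega), if_neg hd0, zero_mul, zero_mul, add_zero]
      · intro t
        rw [pow_succ, hvsum t]
        have lhs : (∑ d ∈ Finset.range (n+1), t^d • v d) * (x + t • y)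
            = (∑ d ∈ Finset.range (n+1), t^d • (v d * x))
              + ∑ d ∈ Finset.range (n+1), t^(d+1) • (v d * y) := by
          rw [mul_add, Finset.sum_mul, Finset.sum_mul]
          congr 1
          · exact Finset.sum_congr rfl fun d _ => smul_mul_assoc _ _ _
          · refine Finset.sum_congr rfl fun d _ => ?_
            rw [smul_mul_assoc, mul_smul_comm, smul_smul, ← pow_succ]
        rw [lhs]
        have rhs : ∑ d ∈ Finset.range (n+2), t^d • (v d * x + if d = 0 then 0 else v (d-1) * y)
            = (∑ d ∈ Finset.range (n+2), t^d • (v d * x))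
              + ∑ d ∈ Finset.range (n+2), t^d • (if d = 0 then 0 else v (d-1) * y) := by
          rw [← Finset.sum_add_distrib]
          exact Finset.sum_congr rfl fun d _ => smul_add _ _ _
        rw [rhs]
        congr 1
        · conv_rhs => rw [Finset.sum_range_succ]
          rw [hvtop (n+1) (by omega), zero_mul, smul_zero, add_zero]
        · conv_rhs => rw [Finset.sum_range_succ']
          simp only [Nat.succ_ne_zero, if_neg, Nat.add_sub_cancel, if_pos rfl, smul_zero, add_zero,
            reduceIte]

lemma star_id {R : Type*} [Ring R] (k : ℕ) (x y c : R) :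
    ∑ j ∈ Finset.range (k+1), fS (k+1) x (c * y ^ j) * y ^ (k - j)
    = (k+1) • (x ^ k * c * y ^ k) + ∑ i ∈ Finset.range k, x ^ i * c * fS (k+1) y (x ^ (k - i)) := by
  have expand : ∀ j ∈ Finset.range (k+1), fS (k+1) x (c * y^j) * y^(k-j)
      = ∑ i ∈ Finset.range (k+1), x^i * (c*y^j) * x^(k-i) * y^(k-j) := by
    intro j _
    rw [fS, Finset.sum_mul]
    exact Finset.sum_congr rfl fun i _ => by rw [Nat.add_sub_cancel]
  rw [Finset.sum_congr rfl expand, Finset.sum_comm, Finset.sum_range_succ, add_comm]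
  congr 1
  · have h1 : ∀ j ∈ Finset.range (k+1), x^k * (c*y^j) * x^(k-k) * y^(k-j) = x^k * c * y^k := by
      intro j hj
      have hj' : j ≤ k := by have := Finset.mem_range.1 hj; omega
      rw [Nat.sub_self, pow_zero, mul_one, mul_assoc, mul_assoc, ← pow_add,
        Nat.add_sub_cancel' hj', ← mul_assoc]
    rw [Finset.sum_congr rfl h1, Finset.sum_const, Finset.card_range]
  · refine Finset.sum_congr rfl fun i _ => ?_
    rw [fS, Finset.mul_sum]
    refine Finset.sum_congr rfl fun j _ => ?_
    rw [Nat.add_sub_cancel]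
    simp only [mul_assoc]

section Core
variable {F A : Type*} [RCLike F] [NonUnitalNormedRing A] [NormedSpace F A]
    [IsScalarTower F A A] [SMulCommClass F A A]

instance : SMulCommClass F (Unitization F A) (Unitization F A) := by
  constructor
  intro t x y
  simp only [smul_eq_mul]
  refine Unitization.ext ?_ ?_
  · simp only [Unitization.fst_mul, Unitization.fst_smul, smul_eq_mul]; ring
  · simp only [Unitization.snd_mul, Unitization.fst_smul, Unitization.snd_smul]
    rw [smul_add, smul_add]
    congr 1
    · congr 1
      · rw [smul_comm]
      · rw [smul_eq_mul, mul_smul]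
    · rw [mul_smul_comm]

instance : IsScalarTower F (Unitization F A) (Unitization F A) := by
  constructor
  intro t x y
  simp only [smul_eq_mul]
  refine Unitization.ext ?_ ?_
  · simp [Unitization.fst_mul, mul_assoc]
  · simp only [Unitization.snd_mul, Unitization.fst_smul, Unitization.snd_smul]
    rw [smul_eq_mul, mul_smul, smul_comm y.fst t, smul_mul_assoc]
    simp [smul_add]

lemma inr_pow_exists (a : A) (e : ℕ) (he : 1 ≤ e) :
    ∃ a' : A, ((a : Unitization F A)) ^ e = (a' : Unitization F A) := by
  induction e with
  | zero => omega
  | succ e ih =>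
      rcases Nat.eq_zero_or_pos e with h | h
      · subst h; exact ⟨a, pow_one _⟩
      · obtain ⟨a', ha⟩ := ih h
        exact ⟨a' * a, by rw [pow_succ, ha, ← Unitization.inr_mul]⟩

lemma mul_inr_exists (b : Unitization F A) (a : A) :
    ∃ a' : A, b * (a : Unitization F A) = (a' : Unitization F A) := by
  refine ⟨b.fst • a + b.snd * a, ?_⟩
  conv_lhs => rw [← Unitization.inl_fst_add_inr_snd_eq b]
  rw [add_mul, Unitization.inl_mul_inr, ← Unitization.inr_mul, ← Unitization.inr_add]

lemma inr_mul_exists (a : A) (b : Unitization F A) :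
    ∃ a' : A, (a : Unitization F A) * b = (a' : Unitization F A) := by
  refine ⟨b.fst • a + a * b.snd, ?_⟩
  conv_lhs => rw [← Unitization.inl_fst_add_inr_snd_eq b]
  rw [mul_add, Unitization.inr_mul_inl, ← Unitization.inr_mul, ← Unitization.inr_add]

/-- The two-sided ideal generated by all `e`-th powers (`e ≥ s`) of elements of `A`
inside the unitization. -/
def LL (F : Type*) (A : Type*) [RCLike F] [NonUnitalNormedRing A] [NormedSpace F A]
    [IsScalarTower F A A] [SMulCommClass F A A] (s : ℕ) : Submodule F (Unitization F A) :=
  Submodule.span F {w | ∃ (u v : Unitization F A) (a : A) (e : ℕ),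
    s ≤ e ∧ 1 ≤ e ∧ w = u * (a : Unitization F A) ^ e * v}

lemma pow_mem_LL {s e : ℕ} (hse : s ≤ e) (he : 1 ≤ e) (a : A) :
    ((a : Unitization F A)) ^ e ∈ LL F A s :=
  Submodule.subset_span ⟨1, 1, a, e, hse, he, by rw [one_mul, mul_one]⟩

lemma LL_mul_left {s : ℕ} (b : Unitization F A) {x : Unitization F A} (hx : x ∈ LL F A s) :
    b * x ∈ LL F A s := by
  induction hx using Submodule.span_induction with
  | mem w hw =>
      obtain ⟨u, v, a, e, h1, h2, rfl⟩ := hw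
      exact Submodule.subset_span ⟨b*u, v, a, e, h1, h2, by rw [← mul_assoc, ← mul_assoc]⟩
  | zero => rw [mul_zero]; exact zero_mem _
  | add x y hx hy ihx ihy => rw [mul_add]; exact add_mem ihx ihy
  | smul t x hx ih => rw [mul_smul_comm]; exact Submodule.smul_mem _ _ ih

lemma LL_mul_right {s : ℕ} (b : Unitization F A) {x : Unitization F A} (hx : x ∈ LL F A s) :
    x * b ∈ LL F A s := by
  induction hx using Submodule.span_induction with
  | mem w hw =>
      obtain ⟨u, v, a, e, h1, h2, rfl⟩ := hw
      exact Submodule.subset_span ⟨u, v*b, a, e, h1, h2, by rw [← mul_assoc]⟩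
  | zero => rw [zero_mul]; exact zero_mem _
  | add x y hx hy ihx ihy => rw [add_mul]; exact add_mem ihx ihy
  | smul t x hx ih => rw [smul_mul_assoc]; exact Submodule.smul_mem _ _ ih

lemma LL_eq_bot (m : ℕ) (hm : ∀ a : A, ((a : Unitization F A))^m = 0) : LL F A m = ⊥ := by
  refine le_antisymm ?_ bot_le
  rw [LL, Submodule.span_le]
  rintro w ⟨u, v, a, e, h1, h2, rfl⟩
  have h3 : (a : Unitization F A)^e = 0 := by
    have h4 : e = m + (e - m) := by omega
    rw [h4, pow_add, hm, zero_mul]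
  simp [h3]

lemma fS_mem (T : Submodule F (Unitization F A)) (n : ℕ) (hn : 1 ≤ n)
    (hp : ∀ a : A, ((a : Unitization F A))^n ∈ T) (a c : A) :
    fS n (a : Unitization F A) (c : Unitization F A) ∈ T := by
  obtain ⟨v, hv0, hv1, hvn, hvtop, hvsum⟩ :=
    exists_coeffs (F := F) (a : Unitization F A) (c : Unitization F A) n
  have key : ∀ d : Fin (n+1), v d ∈ T := by
    refine vmem T (fun i : Fin (n+1) => ((i : ℕ) : F)) ?_ (fun d => v (d : ℕ)) ?_
    · exact fun i j h => Fin.ext (Nat.cast_injective h)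
    · intro i
      have h5 : ∑ d : Fin (n+1), (((i:ℕ):F)) ^ (d : ℕ) • v (d : ℕ)
          = ∑ d ∈ Finset.range (n+1), (((i:ℕ):F)) ^ d • v d :=
        Fin.sum_univ_eq_sum_range (fun d => (((i:ℕ):F)) ^ d • v d) (n+1)
      rw [h5, ← hvsum ((i:ℕ):F)]
      have h6 : (a : Unitization F A) + ((i:ℕ):F) • (c : Unitization F A)
          = ((a + ((i:ℕ):F) • c : A) : Unitization F A) := by
        rw [Unitization.inr_add, Unitization.inr_smul]
      rw [h6]
      exact hp _
  have h7 := key ⟨1, by omega⟩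
  rwa [hv1] at h7

lemma formanek (s : ℕ) (a b z : A) :
    ((a : Unitization F A))^s * (z : Unitization F A) * ((b : Unitization F A))^s
      ∈ LL F A (s+1) := by
  set x := (a : Unitization F A) with hx
  set y := (b : Unitization F A) with hy
  set c := (z : Unitization F A) with hc
  have hstar := star_id s x y c
  have hp : ∀ a' : A, ((a' : Unitization F A))^(s+1) ∈ LL F A (s+1) :=
    fun a' => pow_mem_LL le_rfl (by omega) a'
  have hLHS : ∑ j ∈ Finset.range (s+1), fS (s+1) x (c * y ^ j) * y ^ (s - j) ∈ LL F A (s+1) := by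
    refine Submodule.sum_mem _ fun j _ => ?_
    have hcy : ∃ w : A, c * y ^ j = (w : Unitization F A) := by
      rcases Nat.eq_zero_or_pos j with h | h
      · subst h; exact ⟨z, by rw [pow_zero, mul_one]⟩
      · obtain ⟨b', hb'⟩ := inr_pow_exists (F := F) b j h
        exact ⟨z * b', by rw [hy, hb', hc, ← Unitization.inr_mul]⟩
    obtain ⟨w, hw⟩ := hcy
    rw [hw]
    exact LL_mul_right _ (fS_mem _ _ (by omega) hp a w)
  have hRHS2 : ∑ i ∈ Finset.range s, x ^ i * c * fS (s+1) y (x ^ (s - i)) ∈ LL F A (s+1) := by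
    refine Submodule.sum_mem _ fun i hi => ?_
    have hi' : i < s := Finset.mem_range.1 hi
    obtain ⟨a', ha'⟩ := inr_pow_exists (F := F) a (s - i) (by omega)
    rw [← hx] at ha'
    rw [ha']
    exact LL_mul_left _ (fS_mem _ _ (by omega) hp b a')
  have hsm : (s+1) • (x ^ s * c * y ^ s) ∈ LL F A (s+1) := by
    have h8 : (s+1) • (x ^ s * c * y ^ s)
        = (∑ j ∈ Finset.range (s+1), fS (s+1) x (c * y ^ j) * y ^ (s - j))
          - ∑ i ∈ Finset.range s, x ^ i * c * fS (s+1) y (x ^ (s - i)) := by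
      rw [hstar]; abel
    rw [h8]
    exact sub_mem hLHS hRHS2
  have h9 : (((s+1 : ℕ) : F)) • (x ^ s * c * y ^ s) ∈ LL F A (s+1) := by
    rw [Nat.cast_smul_eq_nsmul]; exact hsm
  have h10 := Submodule.smul_mem (LL F A (s+1)) (((s+1:ℕ):F))⁻¹ h9
  rwa [smul_smul, inv_mul_cancel₀ (Nat.cast_ne_zero.2 (by omega)), one_smul] at h10

lemma formanek_ext {s e e' : ℕ} (he : s ≤ e) (he1 : 1 ≤ e) (he' : s ≤ e') (he1' : 1 ≤ e')
    (a b z : A) :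
    ((a : Unitization F A))^e * (z : Unitization F A) * ((b : Unitization F A))^e'
      ∈ LL F A (s+1) := by
  have h1 : ((a : Unitization F A))^e
      = (a : Unitization F A)^(e-s) * (a : Unitization F A)^s := by
    rw [← pow_add]; congr 1; omega
  have h2 : ((b : Unitization F A))^e'
      = (b : Unitization F A)^s * (b : Unitization F A)^(e'-s) := by
    rw [← pow_add]; congr 1; omega
  rw [h1, h2]
  have h3 : (a : Unitization F A)^(e-s) * (a : Unitization F A)^s * (z : Unitization F A)
        * ((b : Unitization F A)^s * (b : Unitization F A)^(e'-s))
      = (a : Unitization F A)^(e-s)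
        * (((a : Unitization F A))^s * (z : Unitization F A) * ((b : Unitization F A))^s)
        * (b : Unitization F A)^(e'-s) := by
    simp only [mul_assoc]
  rw [h3]
  exact LL_mul_right _ (LL_mul_left _ (formanek s a b z))

lemma sandwich {s : ℕ} {X Y : Unitization F A} (hX : X ∈ LL F A s) (hY : Y ∈ LL F A s)
    (z : A) : X * (z : Unitization F A) * Y ∈ LL F A (s+1) := by
  induction hY using Submodule.span_induction with
  | mem w hw =>
      obtain ⟨u', v', b, e', h1', h2', rfl⟩ := hw
      induction hX using Submodule.span_induction with
      | mem w' hw' =>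
          obtain ⟨u, v, a, e, h1, h2, rfl⟩ := hw'
          obtain ⟨w1, hw1⟩ := mul_inr_exists v z
          obtain ⟨w2, hw2⟩ := inr_mul_exists w1 u'
          have key := formanek_ext (F := F) h1 h2 h1' h2' a b w2
          have heq : (u * (a : Unitization F A)^e * v) * (z : Unitization F A)
                * (u' * (b : Unitization F A)^e' * v')
              = u * (((a : Unitization F A))^e * (w2 : Unitization F A)
                  * ((b : Unitization F A))^e') * v' := by
            rw [← hw2, ← hw1]
            simp only [mul_assoc]
          rw [heq]
          exact LL_mul_right _ (LL_mul_left _ key)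
      | zero => rw [zero_mul, zero_mul]; exact zero_mem _
      | add x₁ x₂ hx1 hx2 ih1 ih2 => rw [add_mul, add_mul]; exact add_mem ih1 ih2
      | smul t x hx ih => rw [smul_mul_assoc, smul_mul_assoc]; exact Submodule.smul_mem _ _ ih
  | zero => rw [mul_zero]; exact zero_mem _
  | add y₁ y₂ hy1 hy2 ih1 ih2 => rw [mul_add]; exact add_mem ih1 ih2
  | smul t y hy ih => rw [mul_smul_comm]; exact Submodule.smul_mem _ _ ih


lemma prodSeq_split {R : Type*} [Semigroup R] (g : ℕ → R) (p q : ℕ) :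
    prodSeq g (p + q + 1) = prodSeq g p * prodSeq (fun i => g (p + 1 + i)) q := by
  induction q with
  | zero => rfl
  | succ q ih =>
      show prodSeq g (p+q+1) * g (p+q+1+1) = prodSeq g p * (prodSeq (fun i => g (p+1+i)) q * g (p+1+(q+1)))
      have hg : p+q+1+1 = p+1+(q+1) := by omega
      rw [hg, ih, mul_assoc]

lemma inr_prodSeq (f : ℕ → A) (k : ℕ) :
    ((prodSeq f k : A) : Unitization F A) = prodSeq (fun i => ((f i : A) : Unitization F A)) k := by
  induction k with
  | zero => rfl
  | succ k ih =>
      show ((prodSeq f k * f (k+1) : A) : Unitization F A) = _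
      rw [Unitization.inr_mul, ih]
      rfl

lemma prodSeq_const_pow {R : Type*} [Monoid R] (b : R) (k : ℕ) :
    prodSeq (fun _ => b) k = b ^ (k+1) := by
  induction k with
  | zero => exact (pow_one b).symm
  | succ k ih =>
      show prodSeq (fun _ => b) k * b = _
      rw [ih, ← pow_succ]

lemma products_mem (k : ℕ) :
    ∃ N : ℕ, ∀ f : ℕ → A, prodSeq (fun i => ((f i : A) : Unitization F A)) N ∈ LL F A (k+1) := by
  induction k with
  | zero =>
      refine ⟨0, fun f => ?_⟩
      show ((f 0 : A) : Unitization F A) ∈ LL F A 1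
      rw [← pow_one ((f 0 : A) : Unitization F A)]
      exact pow_mem_LL le_rfl le_rfl _
  | succ k ih =>
      obtain ⟨N, hN⟩ := ih
      refine ⟨2*N + 2, fun f => ?_⟩
      set g : ℕ → Unitization F A := fun i => ((f i : A) : Unitization F A) with hgdef
      have h1 : 2*N+2 = N + (N+1) + 1 := by omega
      have h2 : prodSeq (fun i => g (N + 1 + i)) (N+1)
          = g (N+1) * prodSeq (fun i => g (N + 2 + i)) N := by
        have h3 : prodSeq (fun i => g (N+1+i)) (0 + N + 1)
            = prodSeq (fun i => g (N+1+i)) 0 * prodSeq (fun j => g (N+1+(0+1+j))) N :=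
          prodSeq_split (fun i => g (N+1+i)) 0 N
        have h4 : (fun j => g (N+1+(0+1+j))) = fun j => g (N+2+j) := by
          funext j; congr 1; omega
        have h5 : (0 : ℕ) + N + 1 = N + 1 := by omega
        rw [h5, h4] at h3
        exact h3
      rw [h1, prodSeq_split g N (N+1), h2, ← mul_assoc]
      have hX : prodSeq g N ∈ LL F A (k+1) := hN f
      have hY : prodSeq (fun i => g (N+2+i)) N ∈ LL F A (k+1) := hN (fun i => f (N+2+i))
      exact sandwich hX hY (f (N+1))

lemma alg_main (m : ℕ) (hm1 : 1 ≤ m) (hm : ∀ a : A, ((a : Unitization F A))^m = 0) :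
    ∃ N : ℕ, ∀ f : ℕ → A, prodSeq f N = 0 := by
  obtain ⟨N, hN⟩ := products_mem (F := F) (A := A) (m - 1)
  refine ⟨N, fun f => ?_⟩
  have h1 : m - 1 + 1 = m := by omega
  have h2 := hN f
  rw [h1, LL_eq_bot m hm, Submodule.mem_bot] at h2
  have h3 : ((prodSeq f N : A) : Unitization F A) = ((0 : A) : Unitization F A) := by
    rw [inr_prodSeq, h2, Unitization.inr_zero]
  exact Unitization.inr_injective h3

lemma uniform_index [CompleteSpace A] (hnil : ∀ a : A, ∃ n : ℕ, prodSeq (fun _ => a) n = 0) :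
    ∃ m : ℕ, 1 ≤ m ∧ ∀ x : A, ((x : Unitization F A))^m = 0 := by
  have hcont : ∀ n : ℕ, Continuous fun a : A => prodSeq (fun _ => a) n := by
    intro n
    induction n with
    | zero => exact continuous_id
    | succ n ih => exact ih.mul continuous_id
  have hclosed : ∀ n : ℕ, IsClosed {a : A | prodSeq (fun _ => a) n = 0} :=
    fun n => isClosed_eq (hcont n) continuous_const
  have hcover : ⋃ n, {a : A | prodSeq (fun _ => a) n = 0} = Set.univ := by
    ext a
    simp only [Set.mem_iUnion, Set.mem_univ, iff_true, Set.mem_setOf_eq]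
    exact hnil a
  obtain ⟨n, a₀, ha₀⟩ := nonempty_interior_of_iUnion_of_closed hclosed hcover
  obtain ⟨ε, hε, hball⟩ := Metric.isOpen_iff.1 isOpen_interior a₀ ha₀
  refine ⟨n+1, by omega, fun x => ?_⟩
  set δ : ℝ := ε / ((n+2) * (‖x‖ + 1)) with hδdef
  have hδpos : 0 < δ := by positivity
  set t : Fin (n+2) → F := fun i => ((i : ℕ) : F) * ((δ : ℝ) : F) with htdef
  have htinj : Function.Injective t := by
    intro i j h
    have hδF : ((δ : ℝ) : F) ≠ 0 := by
      simpa using hδpos.ne'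
    have h1 : ((i : ℕ) : F) = ((j : ℕ) : F) := mul_right_cancel₀ hδF h
    exact Fin.ext (Nat.cast_injective h1)
  have hmem : ∀ i : Fin (n+2), a₀ + t i • x ∈ Metric.ball a₀ ε := by
    intro i
    rw [Metric.mem_ball, dist_eq_norm, add_sub_cancel_left]
    have hti : ‖t i‖ ≤ (n+1) * δ := by
      rw [htdef]
      simp only [norm_mul, RCLike.norm_natCast, RCLike.norm_ofReal, abs_of_pos hδpos]
      have : ((i : ℕ) : ℝ) ≤ (n+1 : ℝ) := by
        have := i.isLt
        exact_mod_cast Nat.le_of_lt_succ this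
      nlinarith [hδpos]
    have hD : (0:ℝ) < ((n:ℝ)+2) * (‖x‖+1) := by positivity
    have key : ((n:ℝ)+1) * ‖x‖ < ((n:ℝ)+2) * (‖x‖+1) := by nlinarith [norm_nonneg x]
    calc ‖t i • x‖ = ‖t i‖ * ‖x‖ := norm_smul _ _
      _ ≤ ((n+1) * δ) * ‖x‖ := by nlinarith [norm_nonneg x]
      _ = ((n:ℝ)+1) * ‖x‖ * (ε / (((n:ℝ)+2) * (‖x‖+1))) := by rw [hδdef]; push_cast; ring
      _ < (((n:ℝ)+2) * (‖x‖+1)) * (ε / (((n:ℝ)+2) * (‖x‖+1))) :=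
          mul_lt_mul_of_pos_right key (div_pos hε hD)
      _ = ε := by field_simp
  have hzero : ∀ i : Fin (n+2),
      (((a₀ + t i • x : A) : Unitization F A)) ^ (n+1) = 0 := by
    intro i
    have h1 : a₀ + t i • x ∈ {a : A | prodSeq (fun _ => a) n = 0} :=
      interior_subset (hball (hmem i))
    have h2 : prodSeq (fun _ => (a₀ + t i • x : A)) n = 0 := h1
    rw [← prodSeq_const_pow, ← inr_prodSeq, h2, Unitization.inr_zero]
  obtain ⟨v, hv0, hv1, hvn, hvtop, hvsum⟩ :=
    exists_coeffs (F := F) ((a₀ : Unitization F A)) ((x : Unitization F A)) (n+1)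
  have hall : ∀ d : Fin (n+2), v (d : ℕ) ∈ (⊥ : Submodule F (Unitization F A)) := by
    refine vmem ⊥ t htinj (fun d => v (d : ℕ)) ?_
    intro i
    have h5 : ∑ d : Fin (n+2), t i ^ (d : ℕ) • v (d : ℕ)
        = ∑ d ∈ Finset.range (n+2), t i ^ d • v d :=
      Fin.sum_univ_eq_sum_range (fun d => t i ^ d • v d) (n+2)
    rw [h5, ← hvsum (t i)]
    have h6 : (a₀ : Unitization F A) + t i • (x : Unitization F A)
        = ((a₀ + t i • x : A) : Unitization F A) := by
      rw [Unitization.inr_add, Unitization.inr_smul]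
    rw [h6, hzero i, Submodule.mem_bot]
  have h7 := hall ⟨n+1, by omega⟩
  rw [Submodule.mem_bot] at h7
  rw [← hvn]
  exact h7

end Core
end G11

/-- Grabiner's theorem: a nil Banach algebra over `ℝ` or `ℂ` is
nilpotent: if every `a` satisfies `aⁿ = 0` for some `n ≥ 1`, then there is an
`N ≥ 1` such that every product of `N` elements of `A` vanishes. -/
theorem stmt_11 {F A : Type*} [RCLike F] [NonUnitalNormedRing A] [NormedSpace F A]
    [IsScalarTower F A A] [SMulCommClass F A A] [CompleteSpace A]
    (hnil : ∀ a : A, ∃ n : ℕ, prodSeq (fun _ => a) n = 0) :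
    ∃ N : ℕ, ∀ f : ℕ → A, prodSeq f N = 0 := by
  obtain ⟨m, hm1, hm⟩ := G11.uniform_index (F := F) hnil
  exact G11.alg_main m hm1 hm
end
end

section
/- Let A be a normed PI-algebra over ℝ or ℂ. If the completion C(A) is nil, then A is nilpotent. -/
open Filter Topology

noncomputable section

/-! ### Auxiliary machinery : Vandermonde extraction, noncommutative linearization,
Higman's identity, and the Nagata–Higman theorem (relative form). -/

section VandermondeAux

open Finset

private lemma vandermonde_mem {F : Type*} [Field F] {M : Type*} [AddCommGroup M] [Module F M]
    {d : ℕ} (t : Fin d → F) (ht : Function.Injective t)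
    (v : Fin d → M) (K : Submodule F M)
    (h : ∀ j, (∑ k : Fin d, (t j) ^ (k : ℕ) • v k) ∈ K) : ∀ k, v k ∈ K := by
  classical
  intro i
  set A : Matrix (Fin d) (Fin d) F := Matrix.vandermonde t with hA
  have hdet : IsUnit A.det := by
    rw [isUnit_iff_ne_zero, hA, Matrix.det_vandermonde_ne_zero_iff]
    exact ht
  have hinv : A⁻¹ * A = 1 := Matrix.nonsing_inv_mul A hdet
  have key : v i = ∑ j : Fin d, (A⁻¹ i j) • ∑ k : Fin d, (t j) ^ (k : ℕ) • v k := by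
    calc v i = ∑ k : Fin d, ((1 : Matrix (Fin d) (Fin d) F) i k) • v k := by
          simp [Matrix.one_apply]
      _ = ∑ k : Fin d, ((A⁻¹ * A) i k) • v k := by rw [hinv]
      _ = ∑ k : Fin d, (∑ j : Fin d, A⁻¹ i j * A j k) • v k := by
          simp [Matrix.mul_apply]
      _ = ∑ k : Fin d, ∑ j : Fin d, (A⁻¹ i j) • ((t j) ^ (k : ℕ) • v k) := by
          refine Finset.sum_congr rfl fun k _ => ?_
          rw [Finset.sum_smul]
          refine Finset.sum_congr rfl fun j _ => ?_
          rw [mul_smul, hA, Matrix.vandermonde_apply]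
      _ = ∑ j : Fin d, ∑ k : Fin d, (A⁻¹ i j) • ((t j) ^ (k : ℕ) • v k) :=
          Finset.sum_comm
      _ = ∑ j : Fin d, (A⁻¹ i j) • ∑ k : Fin d, (t j) ^ (k : ℕ) • v k := by
          simp [Finset.smul_sum]
  rw [key]
  exact Submodule.sum_mem _ fun j _ => Submodule.smul_mem _ _ (h j)

private lemma expand_pow {F : Type*} [Field F] {R : Type*} [Ring R] [Algebra F R]
    (x y : R) (m : ℕ) :
    ∃ c : ℕ → R, c 0 = x ^ m ∧
      c 1 = ∑ i ∈ Finset.range m, x ^ i * y * x ^ (m - 1 - i) ∧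
      c m = y ^ m ∧ (∀ k, m < k → c k = 0) ∧
      ∀ t : F, (x + t • y) ^ m = ∑ k ∈ Finset.range (m + 1), t ^ k • c k := by
  induction m with
  | zero =>
      refine ⟨fun k => if k = 0 then 1 else 0, by simp, by simp, by simp,
        fun k hk => if_neg (by omega), fun t => by simp⟩
  | succ m ih =>
      obtain ⟨c, hc0, hc1, hcm, hctop, hceq⟩ := ih
      refine ⟨fun k => c k * x + (if k = 0 then 0 else c (k - 1) * y), ?_, ?_, ?_, ?_, ?_⟩
      · simp [hc0, pow_succ]
      · simp only [if_neg one_ne_zero]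
        rw [hc1, hc0]
        rw [Finset.sum_range_succ]
        simp only [Nat.add_sub_cancel]
        rw [Finset.sum_mul]
        congr 1
        · refine Finset.sum_congr rfl fun i hi => ?_
          rw [Finset.mem_range] at hi
          have h2 : m - i = (m - 1 - i) + 1 := by omega
          rw [h2, pow_succ, mul_assoc]
        · rw [Nat.sub_self, pow_zero, mul_one]
      · show c (m+1) * x + (if m + 1 = 0 then 0 else c (m + 1 - 1) * y) = y ^ (m+1)
        rw [if_neg (by omega : ¬ m + 1 = 0), Nat.add_sub_cancel, hctop (m+1) (Nat.lt_succ_self m),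
          hcm, zero_mul, zero_add, pow_succ]
      · intro k hk
        match k, hk with
        | (k+1), hk =>
          show c (k+1) * x + (if k + 1 = 0 then 0 else c (k + 1 - 1) * y) = 0
          rw [if_neg (by omega : ¬ k + 1 = 0), Nat.add_sub_cancel, hctop (k+1) (by omega),
            hctop k (by omega), zero_mul, zero_mul, zero_add]
      · intro t
        rw [pow_succ, hceq t, Finset.sum_mul]
        have hterm : ∀ k ∈ Finset.range (m+1),
            (t ^ k • c k) * (x + t • y) = t ^ k • (c k * x) + t ^ (k+1) • (c k * y) := by
          intro k _
          rw [mul_add, smul_mul_assoc, smul_mul_assoc, mul_smul_comm, smul_smul, ← pow_succ]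
        rw [Finset.sum_congr rfl hterm, Finset.sum_add_distrib]
        have hsplit : ∀ k ∈ Finset.range (m+2),
            t ^ k • (c k * x + (if k = 0 then 0 else c (k - 1) * y))
            = t ^ k • (c k * x) + t ^ k • (if k = 0 then (0:R) else c (k - 1) * y) := by
          intro k _; rw [smul_add]
        rw [Finset.sum_congr rfl hsplit, Finset.sum_add_distrib]
        congr 1
        · rw [Finset.sum_range_succ (fun k => t ^ k • (c k * x)) (m+1),
            hctop (m+1) (Nat.lt_succ_self m), zero_mul, smul_zero, add_zero]
        · rw [Finset.sum_range_succ'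
            (fun k => t ^ k • (if k = 0 then (0:R) else c (k - 1) * y)) (m+1)]
          simp

end VandermondeAux

section KeyIdentity

open Finset

variable {R : Type*} [Ring R]

private def fpoly (m : ℕ) (x y : R) : R :=
  ∑ i ∈ Finset.range m, x ^ i * y * x ^ (m - 1 - i)

private lemma inner_split (m : ℕ) (b y : R) :
    ∑ s ∈ Finset.range (m+1), b ^ (s+1) * y * b ^ (m - s)
      = fpoly (m+2) b y - y * b ^ (m+1) := by
  rw [eq_sub_iff_add_eq, fpoly,
    Finset.sum_range_succ' (fun i => b ^ i * y * b ^ (m + 2 - 1 - i)) (m+1)]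
  congr 1
  · refine Finset.sum_congr rfl fun s hs => ?_
    rw [Finset.mem_range] at hs
    congr 2
    omega
  · rw [pow_zero, one_mul]
    rfl

private lemma inner_split' (m : ℕ) (a y : R) :
    ∑ i ∈ Finset.range m, a ^ (i+1) * y * a ^ (m - i)
      = fpoly (m+2) a y - y * a ^ (m+1) - a ^ (m+1) * y := by
  have h := inner_split m a y
  rw [Finset.sum_range_succ, Nat.sub_self, pow_zero, mul_one] at h
  exact eq_sub_of_add_eq h

private lemma key_identity (m : ℕ) (a b c : R) :
    (∑ s ∈ range (m+1), fpoly (m+2) a (b^(s+1) * c) * b^(m-s))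
  - (∑ s ∈ range (m+1), fpoly (m+2) a (b^(s+1)) * (c * b^(m-s)))
  - (∑ s ∈ range (m+1), b^(s+1) * fpoly (m+2) a c * b^(m-s))
  + fpoly (m+2) b (a^(m+1) * c)
  + (∑ i ∈ range (m+1), fpoly (m+2) b (a^(i+1) * c * a^(m-i)))
  + (∑ i ∈ range m, a^(i+1) * fpoly (m+2) b (a^(m-i) * c - c * a^(m-i)))
  = (m+2) • (a^(m+1) * c * b^(m+1)) := by
  set T1 := ∑ s ∈ range (m+1), fpoly (m+2) a (b^(s+1) * c) * b^(m-s) with hT1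
  set T2 := ∑ s ∈ range (m+1), fpoly (m+2) a (b^(s+1)) * (c * b^(m-s)) with hT2
  set T3 := ∑ s ∈ range (m+1), b^(s+1) * fpoly (m+2) a c * b^(m-s) with hT3
  set T4 := fpoly (m+2) b (a^(m+1) * c) with hT4
  set T5 := ∑ i ∈ range (m+1), fpoly (m+2) b (a^(i+1) * c * a^(m-i)) with hT5
  set T6 := ∑ i ∈ range m, a^(i+1) * fpoly (m+2) b (a^(m-i) * c - c * a^(m-i)) with hT6
  have h126 : T1 - T2 + T6
      = -(fpoly (m+2) b (a^(m+1) * c - c * a^(m+1)))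
        + (a^(m+1) * c - c * a^(m+1)) * b^(m+1)
        + ((m+1) • (a^(m+1) * c) - fpoly (m+2) a c + c * a^(m+1)) * b^(m+1) := by
    have h12 : T1 - T2 = -∑ i ∈ range (m+1), ∑ s ∈ range (m+1),
        a^i * b^(s+1) * (a^(m+1-i) * c - c * a^(m+1-i)) * b^(m-s) := by
      rw [hT1, hT2, ← Finset.sum_sub_distrib]
      have hper : ∀ s ∈ range (m+1),
          fpoly (m+2) a (b^(s+1) * c) * b^(m-s) - fpoly (m+2) a (b^(s+1)) * (c * b^(m-s))
          = ∑ i ∈ range (m+1),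
              -(a^i * b^(s+1) * (a^(m+1-i) * c - c * a^(m+1-i)) * b^(m-s)) := by
        intro s _
        rw [fpoly, fpoly, Finset.sum_mul, Finset.sum_mul, ← Finset.sum_sub_distrib,
          Finset.sum_range_succ]
        have hlast : a ^ (m+1) * (b^(s+1) * c) * a ^ (m + 2 - 1 - (m+1)) * b^(m-s)
            - a ^ (m+1) * (b^(s+1)) * a ^ (m + 2 - 1 - (m+1)) * (c * b^(m-s)) = 0 := by
          have : m + 2 - 1 - (m+1) = 0 := by omega
          rw [this, pow_zero]
          noncomm_ring
        rw [hlast, add_zero]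
        refine Finset.sum_congr rfl fun i hi => ?_
        rw [Finset.mem_range] at hi
        have : m + 2 - 1 - i = m + 1 - i := by omega
        rw [this]
        noncomm_ring
      rw [Finset.sum_congr rfl hper, Finset.sum_comm]
      simp only [Finset.sum_neg_distrib]
    have h6 : T6 = ∑ i ∈ range m, ∑ k ∈ range (m+2),
        a^(i+1) * (b^k * (a^(m-i) * c - c * a^(m-i)) * b^(m + 2 - 1 - k)) := by
      rw [hT6]
      refine Finset.sum_congr rfl fun i _ => ?_
      rw [fpoly, Finset.mul_sum]
    rw [h12, h6]
    rw [Finset.sum_range_succ' (fun i => ∑ s ∈ range (m+1),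
      a^i * b^(s+1) * (a^(m+1-i) * c - c * a^(m+1-i)) * b^(m-s)) m]
    have h6' : ∀ i ∈ range m, ∑ k ∈ range (m+2),
        a^(i+1) * (b^k * (a^(m-i) * c - c * a^(m-i)) * b^(m + 2 - 1 - k))
        = (∑ k ∈ range (m+1),
            a^(i+1) * b^(k+1) * (a^(m+1-(i+1)) * c - c * a^(m+1-(i+1))) * b^(m-k))
          + a^(i+1) * (a^(m-i) * c - c * a^(m-i)) * b^(m+1) := by
      intro i hi
      rw [Finset.mem_range] at hi
      rw [Finset.sum_range_succ' (fun k =>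
        a^(i+1) * (b^k * (a^(m-i) * c - c * a^(m-i)) * b^(m + 2 - 1 - k))) (m+1)]
      congr 1
      · refine Finset.sum_congr rfl fun k hk => ?_
        rw [Finset.mem_range] at hk
        have e1 : m + 1 - (i+1) = m - i := by omega
        have e2 : m + 2 - 1 - (k+1) = m - k := by omega
        rw [e1, e2]
        noncomm_ring
      · rw [pow_zero, one_mul]
        have : m + 2 - 1 - 0 = m + 1 := by omega
        rw [this]
        noncomm_ring
    rw [Finset.sum_congr rfl h6', Finset.sum_add_distrib]
    have hcancel : -((∑ i ∈ range m, ∑ s ∈ range (m+1),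
          a^(i+1) * b^(s+1) * (a^(m+1-(i+1)) * c - c * a^(m+1-(i+1))) * b^(m-s))
        + ∑ s ∈ range (m+1), a^0 * b^(s+1) * (a^(m+1-0) * c - c * a^(m+1-0)) * b^(m-s))
        + ((∑ i ∈ range m, ∑ k ∈ range (m+1),
            a^(i+1) * b^(k+1) * (a^(m+1-(i+1)) * c - c * a^(m+1-(i+1))) * b^(m-k))
          + ∑ i ∈ range m, a^(i+1) * (a^(m-i) * c - c * a^(m-i)) * b^(m+1))
        = -(∑ s ∈ range (m+1), a^0 * b^(s+1) * (a^(m+1-0) * c - c * a^(m+1-0)) * b^(m-s))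
          + ∑ i ∈ range m, a^(i+1) * (a^(m-i) * c - c * a^(m-i)) * b^(m+1) := by
      abel
    rw [hcancel]
    congr 1
    · have : ∀ s ∈ range (m+1), a^0 * b^(s+1) * (a^(m+1-0) * c - c * a^(m+1-0)) * b^(m-s)
          = b^(s+1) * (a^(m+1) * c - c * a^(m+1)) * b^(m-s) := by
        intro s _
        rw [pow_zero, Nat.sub_zero, one_mul]
      rw [Finset.sum_congr rfl this, inner_split]
      abel
    · have hper : ∀ i ∈ range m, a^(i+1) * (a^(m-i) * c - c * a^(m-i)) * b^(m+1)
          = (a^(m+1) * c - a^(i+1) * c * a^(m-i)) * b^(m+1) := by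
        intro i hi
        rw [Finset.mem_range] at hi
        have : a^(i+1) * a^(m-i) = a^(m+1) := by
          rw [← pow_add]
          congr 1
          omega
        rw [← this]
        noncomm_ring
      rw [Finset.sum_congr rfl hper, ← Finset.sum_mul]
      congr 1
      rw [Finset.sum_sub_distrib, Finset.sum_const, Finset.card_range, inner_split']
      abel_nf
      rw [succ_nsmul (a^(m+1) * c) m]
      abel
  have h53 : T5 - T3 = fpoly (m+2) a c * b^(m+1) - fpoly (m+2) b (c * a^(m+1)) := by
    have h5 : T5 = (∑ i ∈ range (m+1), ∑ k ∈ range (m+1),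
        b^(k+1) * (a^(i+1) * c * a^(m-i)) * b^(m-k))
        + (∑ i ∈ range (m+1), (a^(i+1) * c * a^(m-i)) * b^(m+1)) := by
      rw [hT5, ← Finset.sum_add_distrib]
      refine Finset.sum_congr rfl fun i _ => ?_
      rw [inner_split m b (a^(i+1) * c * a^(m-i)), sub_add_cancel]
    have h3 : T3 = (∑ s ∈ range (m+1), ∑ i ∈ range (m+1),
        b^(s+1) * (a^(i+1) * c * a^(m-i)) * b^(m-s))
        + (∑ s ∈ range (m+1), b^(s+1) * (c * a^(m+1)) * b^(m-s)) := by
      rw [hT3, ← Finset.sum_add_distrib]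
      refine Finset.sum_congr rfl fun s _ => ?_
      have hac : fpoly (m+2) a c
          = (∑ i ∈ range (m+1), a^(i+1) * c * a^(m-i)) + c * a^(m+1) := by
        rw [inner_split]; abel
      rw [hac, mul_add, add_mul, Finset.mul_sum, Finset.sum_mul]
    rw [h5, h3, Finset.sum_comm (s := range (m+1)) (t := range (m+1))]
    have hrw1 : ∑ i ∈ range (m+1), (a^(i+1) * c * a^(m-i)) * b^(m+1)
        = (fpoly (m+2) a c - c * a^(m+1)) * b^(m+1) := by
      rw [← Finset.sum_mul, inner_split]
    have hrw2 : ∑ s ∈ range (m+1), b^(s+1) * (c * a^(m+1)) * b^(m-s)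
        = fpoly (m+2) b (c * a^(m+1)) - (c * a^(m+1)) * b^(m+1) := inner_split _ _ _
    rw [hrw1, hrw2]
    rw [sub_mul]
    abel
  have hsplit : T1 - T2 - T3 + T4 + T5 + T6 = (T1 - T2 + T6) + (T5 - T3) + T4 := by abel
  rw [hsplit, h126, h53]
  have hF : fpoly (m+2) b (a^(m+1) * c) - fpoly (m+2) b (a^(m+1) * c - c * a^(m+1))
      = fpoly (m+2) b (c * a^(m+1)) := by
    rw [fpoly, fpoly, fpoly, ← Finset.sum_sub_distrib]
    refine Finset.sum_congr rfl fun k _ => ?_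
    noncomm_ring
  rw [sub_mul, add_mul, sub_mul, smul_mul_assoc]
  have hgoal : (m+2) • (a^(m+1) * c * b^(m+1))
      = (m+1) • (a^(m+1) * c * b^(m+1)) + a^(m+1) * c * b^(m+1) := by
    rw [succ_nsmul]
  rw [hgoal, ← hF]
  rw [mul_assoc (a^(m+1)) c (b^(m+1))] at *
  abel

end KeyIdentity

section NagataHigman

open Finset

variable {F : Type*} [Field F] [CharZero F] {R : Type*} [Ring R] [Algebra F R]

private lemma fpoly_mem (K : Submodule F R) (m : ℕ) (x y : R)
    (h : ∀ t : F, (x + t • y) ^ m ∈ K) : fpoly m x y ∈ K := by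
  obtain ⟨c, hc0, hc1, hcm, hctop, hceq⟩ := expand_pow (F := F) x y m
  rcases m with - | m
  · simp [fpoly]
  have hall := vandermonde_mem (F := F) (d := m + 2)
      (fun j : Fin (m+2) => ((j : ℕ) : F))
      (fun i j hij => by
        have : ((i : ℕ) : F) = ((j : ℕ) : F) := hij
        exact Fin.ext (Nat.cast_injective this))
      (fun k => c k) K
      (fun j => by
        have h2 := h ((j : ℕ) : F)
        rw [hceq] at h2
        show (∑ k : Fin (m+2), (((j:ℕ):F)) ^ (k:ℕ) • c (k:ℕ)) ∈ K
        rwa [← Finset.sum_range (fun k => (((j:ℕ):F)) ^ k • c k)])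
  have h1 := hall ⟨1, by omega⟩
  simpa [fpoly, hc1] using h1

private lemma mixed_mem (K S : Submodule F R)
    (hKl : ∀ r : R, ∀ x ∈ K, r * x ∈ K) (hKr : ∀ r : R, ∀ x ∈ K, x * r ∈ K)
    (hSl : ∀ r : R, ∀ x ∈ S, r * x ∈ S) (hSr : ∀ r : R, ∀ x ∈ S, x * r ∈ S)
    (m : ℕ) (hf : ∀ x ∈ S, ∀ y ∈ S, fpoly (m+2) x y ∈ K)
    (a b c : R) (ha : a ∈ S) (hb : b ∈ S) (hc : c ∈ S) :
    a ^ (m+1) * c * b ^ (m+1) ∈ K := by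
  have hb1 : ∀ s : ℕ, b ^ (s+1) ∈ S := fun s => by
    rw [pow_succ]; exact hSl _ _ hb
  have hmem : (m+2) • (a^(m+1) * c * b^(m+1)) ∈ K := by
    rw [← key_identity m a b c]
    refine Submodule.add_mem _ (Submodule.add_mem _ (Submodule.add_mem _ (Submodule.sub_mem _
      (Submodule.sub_mem _ ?_ ?_) ?_) ?_) ?_) ?_
    · exact Submodule.sum_mem _ fun s _ => hKr _ _ (hf a ha _ (hSl _ _ hc))
    · exact Submodule.sum_mem _ fun s _ => hKr _ _ (hf a ha _ (hb1 s))
    · exact Submodule.sum_mem _ fun s _ => hKr _ _ (hKl _ _ (hf a ha c hc))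
    · exact hf b hb _ (hSl _ _ hc)
    · exact Submodule.sum_mem _ fun i _ => hf b hb _ (hSr _ _ (hSl _ _ hc))
    · exact Submodule.sum_mem _ fun i _ => hKl _ _
        (hf b hb _ (Submodule.sub_mem _ (hSl _ _ hc) (hSr _ _ hc)))
  have hne : ((m+2 : ℕ) : F) ≠ 0 := (Nat.cast_ne_zero (R := F)).mpr (by omega)
  have heq : a^(m+1) * c * b^(m+1)
      = (((m+2:ℕ) : F))⁻¹ • ((((m+2:ℕ) : F)) • (a^(m+1) * c * b^(m+1))) := by
    rw [smul_smul, inv_mul_cancel₀ hne, one_smul]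
  rw [heq]
  refine Submodule.smul_mem _ _ ?_
  rw [Nat.cast_smul_eq_nsmul F]
  exact hmem

private lemma nagata_higman (S : Submodule F R)
    (hSl : ∀ r : R, ∀ x ∈ S, r * x ∈ S) (hSr : ∀ r : R, ∀ x ∈ S, x * r ∈ S) :
    ∀ n : ℕ, ∀ K : Submodule F R,
      (∀ r : R, ∀ x ∈ K, r * x ∈ K) → (∀ r : R, ∀ x ∈ K, x * r ∈ K) →
      (∀ x ∈ S, x ^ n ∈ K) →
      ∀ l : List R, (∀ x ∈ l, x ∈ S) → l.length = 2 ^ n - 1 → l.prod ∈ K := by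
  intro n
  induction n with
  | zero =>
      intro K hKl hKr hpow l hl hlen
      have h1 : (1 : R) ∈ K := by simpa using hpow 0 S.zero_mem
      simpa using hKl l.prod 1 h1
  | succ n IH =>
      intro K hKl hKr hpow l hl hlen
      rcases n with - | m
      · have hlen1 : l.length = 1 := by simpa using hlen
        match l, hlen1 with
        | [x], _ =>
          simp only [List.prod_cons, List.prod_nil, mul_one]
          simpa using hpow x (hl x (by simp))
      · set gens : Set R := {z | ∃ a ∈ S, ∃ r s : R, z = r * a ^ (m+1) * s} with hgens
        set J : Submodule F R := K ⊔ Submodule.span F gens with hJ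
        have hgensJ : ∀ a ∈ S, ∀ r s : R, r * a ^ (m+1) * s ∈ J :=
          fun a ha r s => Submodule.mem_sup_right (Submodule.subset_span ⟨a, ha, r, s, rfl⟩)
        have hspanl : ∀ r : R, ∀ x ∈ Submodule.span F gens, r * x ∈ Submodule.span F gens := by
          intro r x hx
          induction hx using Submodule.span_induction with
          | mem z hz =>
              obtain ⟨a, ha, u, v, rfl⟩ := hz
              exact Submodule.subset_span ⟨a, ha, r * u, v, by noncomm_ring⟩
          | zero => simpa using Submodule.zero_mem (Submodule.span F gens)
          | add y z _ _ hy hz => rw [mul_add]; exact Submodule.add_mem _ hy hz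
          | smul t y _ hy => rw [mul_smul_comm]; exact Submodule.smul_mem _ _ hy
        have hspanr : ∀ r : R, ∀ x ∈ Submodule.span F gens, x * r ∈ Submodule.span F gens := by
          intro r x hx
          induction hx using Submodule.span_induction with
          | mem z hz =>
              obtain ⟨a, ha, u, v, rfl⟩ := hz
              exact Submodule.subset_span ⟨a, ha, u, v * r, by noncomm_ring⟩
          | zero => simpa using Submodule.zero_mem (Submodule.span F gens)
          | add y z _ _ hy hz => rw [add_mul]; exact Submodule.add_mem _ hy hz
          | smul t y _ hy => rw [smul_mul_assoc]; exact Submodule.smul_mem _ _ hy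
        have hJl : ∀ r : R, ∀ x ∈ J, r * x ∈ J := by
          intro r x hx
          rw [hJ, Submodule.mem_sup] at hx ⊢
          obtain ⟨y, hy, z, hz, rfl⟩ := hx
          exact ⟨r * y, hKl r y hy, r * z, hspanl r z hz, by rw [mul_add]⟩
        have hJr : ∀ r : R, ∀ x ∈ J, x * r ∈ J := by
          intro r x hx
          rw [hJ, Submodule.mem_sup] at hx ⊢
          obtain ⟨y, hy, z, hz, rfl⟩ := hx
          exact ⟨y * r, hKr r y hy, z * r, hspanr r z hz, by rw [add_mul]⟩
        have hpowJ : ∀ x ∈ S, x ^ (m+1) ∈ J := by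
          intro x hx
          have h1 : x ^ (m+1) = 1 * x ^ (m+1) * 1 := by rw [one_mul, mul_one]
          rw [h1]
          exact hgensJ x hx 1 1
        have hf : ∀ x ∈ S, ∀ y ∈ S, fpoly (m+2) x y ∈ K := by
          intro x hx y hy
          exact fpoly_mem K (m+2) x y fun t => hpow _ (Submodule.add_mem _ hx
            (Submodule.smul_mem _ _ hy))
        have hclaimA : ∀ a ∈ S, ∀ w ∈ S, ∀ q ∈ Submodule.span F gens,
            (a ^ (m+1) * w) * q ∈ K := by
          intro a ha w hw q hq
          induction hq using Submodule.span_induction with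
          | mem z hz =>
              obtain ⟨b, hb, u, v, rfl⟩ := hz
              have he : (a ^ (m+1) * w) * (u * b ^ (m+1) * v)
                  = (a ^ (m+1) * (w * u) * b ^ (m+1)) * v := by noncomm_ring
              rw [he]
              exact hKr _ _ (mixed_mem K S hKl hKr hSl hSr m hf a b (w * u) ha hb
                (hSr u w hw))
          | zero => simpa using Submodule.zero_mem K
          | add y z _ _ hy hz => rw [mul_add]; exact Submodule.add_mem _ hy hz
          | smul t y _ hy => rw [mul_smul_comm]; exact Submodule.smul_mem _ _ hy
        have hclaimB : ∀ p ∈ Submodule.span F gens, ∀ x ∈ S,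
            ∀ q ∈ Submodule.span F gens, p * (x * q) ∈ K := by
          intro p hp x hx q hq
          induction hp using Submodule.span_induction with
          | mem z hz =>
              obtain ⟨a, ha, u, v, rfl⟩ := hz
              have he : (u * a ^ (m+1) * v) * (x * q)
                  = u * ((a ^ (m+1) * (v * x)) * q) := by noncomm_ring
              rw [he]
              exact hKl _ _ (hclaimA a ha (v * x) (hSl v x hx) q hq)
          | zero => simpa using Submodule.zero_mem K
          | add y z _ _ hy hz => rw [add_mul]; exact Submodule.add_mem _ hy hz
          | smul t y _ hy => rw [smul_mul_assoc]; exact Submodule.smul_mem _ _ hy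
        have hJSJ : ∀ p ∈ J, ∀ x ∈ S, ∀ q ∈ J, p * (x * q) ∈ K := by
          intro p hp x hx q hq
          rw [hJ, Submodule.mem_sup] at hp hq
          obtain ⟨pk, hpk, ps, hps, rfl⟩ := hp
          obtain ⟨qk, hqk, qs, hqs, rfl⟩ := hq
          have he : (pk + ps) * (x * (qk + qs))
              = pk * (x * (qk + qs)) + ps * (x * qk) + ps * (x * qs) := by noncomm_ring
          rw [he]
          refine Submodule.add_mem _ (Submodule.add_mem _ ?_ ?_) ?_
          · exact hKr _ _ hpk
          · exact hKl _ _ (hKl _ _ hqk)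
          · exact hclaimB ps hps x hx qs hqs
        set t := 2 ^ (m+1) - 1 with ht
        have hpos : 1 ≤ 2 ^ (m+1) := Nat.one_le_two_pow
        have hlen' : l.length = t + 1 + t := by
          rw [hlen, ht]
          rw [pow_succ 2 (m+1)]
          omega
        have hl1 : (l.take t).length = t := by
          rw [List.length_take]
          omega
        have hl2' : (l.drop t).length = t + 1 := by
          rw [List.length_drop]
          omega
        obtain ⟨x, l2, hxl2⟩ : ∃ x l2, l.drop t = x :: l2 := by
          rcases hd : l.drop t with - | ⟨x, l2⟩
          · rw [hd] at hl2'; simp at hl2'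
          · exact ⟨x, l2, rfl⟩
        have hl2len : l2.length = t := by
          have h3 := hl2'
          rw [hxl2] at h3
          simpa using h3
        have hprod : l.prod = (l.take t).prod * (x * l2.prod) := by
          conv_lhs => rw [← List.take_append_drop t l]
          rw [List.prod_append, hxl2, List.prod_cons]
        have hmem1 : (l.take t).prod ∈ J :=
          IH J hJl hJr hpowJ (l.take t) (fun y hy => hl y (List.take_subset t l hy)) hl1
        have hmem2 : l2.prod ∈ J :=
          IH J hJl hJr hpowJ l2
            (fun y hy => hl y (List.drop_subset t l
              (by rw [hxl2]; exact List.mem_cons_of_mem x hy)))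
            hl2len
        have hxS : x ∈ S :=
          hl x (List.drop_subset t l (by rw [hxl2]; exact List.mem_cons_self))
        rw [hprod]
        exact hJSJ _ hmem1 x hxS _ hmem2

end NagataHigman

section AnalyticAux

open Finset

private lemma continuous_prodSeq_const {B : Type*} [NonUnitalNormedRing B] (n : ℕ) :
    Continuous (fun b : B => prodSeq (fun _ => b) n) := by
  induction n with
  | zero => exact continuous_id
  | succ n ih => exact ih.mul continuous_id

private lemma inr_prodSeq_const {F : Type*} [Field F] {B : Type*} [NonUnitalRing B]
    [Module F B] [IsScalarTower F B B] [SMulCommClass F B B] (z : B) (k : ℕ) :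
    ((z : Unitization F B)) ^ (k+1) = ((prodSeq (fun _ => z) k : B) : Unitization F B) := by
  induction k with
  | zero => simp [prodSeq]
  | succ k ih =>
      rw [pow_succ, ih]
      show _ = ((prodSeq (fun _ => z) k * z : B) : Unitization F B)
      rw [Unitization.inr_mul]

private lemma uniform_nil_index (F : Type*) [RCLike F] {B : Type*}
    [NonUnitalNormedRing B] [NormedSpace F B] [IsScalarTower F B B] [SMulCommClass F B B]
    [CompleteSpace B]
    (hnil : ∀ b : B, ∃ n : ℕ, prodSeq (fun _ => b) n = 0) :
    ∃ n₀ : ℕ, ∀ x : B, prodSeq (fun _ => x) n₀ = 0 := by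
  have hne : Nonempty B := ⟨0⟩
  set C : ℕ → Set B := fun n => {b : B | prodSeq (fun _ => b) n = 0} with hC
  have hclosed : ∀ n, IsClosed (C n) :=
    fun n => isClosed_eq (continuous_prodSeq_const n) continuous_const
  have hcover : (⋃ n, C n) = Set.univ := by
    ext b
    simp only [Set.mem_iUnion, Set.mem_univ, iff_true, hC, Set.mem_setOf_eq]
    exact hnil b
  obtain ⟨n₀, hint⟩ := nonempty_interior_of_iUnion_of_closed hclosed hcover
  obtain ⟨a, hamem⟩ := hint
  obtain ⟨r, hr, hball⟩ := Metric.isOpen_iff.mp isOpen_interior a hamem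
  have hball' : Metric.ball a r ⊆ C n₀ := hball.trans interior_subset
  refine ⟨n₀, fun x => ?_⟩
  set N := n₀ + 1 with hN
  obtain ⟨c, hc0, hc1, hcm, hctop, hceq⟩ :=
    expand_pow (F := F) (R := Unitization F B) (↑a) (↑x) N
  have hx1 : (0:ℝ) < ‖x‖ + 1 := by positivity
  set δ : ℝ := r / (2 * (‖x‖ + 1) * (N + 1)) with hδ
  have hδpos : 0 < δ := by
    rw [hδ]; positivity
  set tt : Fin (N+1) → F := fun j => (δ : F) * (((j : ℕ) + 1 : ℕ) : F) with htt
  have htt_inj : Function.Injective tt := by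
    intro i j hij
    rw [htt] at hij
    simp only at hij
    have hδF : ((δ : F)) ≠ 0 := by
      simpa using hδpos.ne'
    have h4 := mul_left_cancel₀ hδF hij
    have h2 : ((i : ℕ) + 1 : ℕ) = ((j : ℕ) + 1 : ℕ) := Nat.cast_injective h4
    exact Fin.ext (by omega)
  have hsmall : ∀ j : Fin (N+1), ‖tt j • x‖ < r := by
    intro j
    rw [norm_smul, htt]
    simp only
    rw [norm_mul]
    have h1 : ‖((δ:ℝ) : F)‖ = δ := by
      rw [RCLike.norm_ofReal, abs_of_pos hδpos]
    have h2 : ‖((((j:ℕ) + 1 : ℕ)) : F)‖ = ((j:ℕ) + 1 : ℝ) := by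
      rw [RCLike.norm_natCast]
      push_cast
      ring
    rw [h1, h2]
    have hj : ((j:ℕ) : ℝ) + 1 ≤ (N : ℝ) + 1 := by
      have h3 : ((j:ℕ) : ℝ) ≤ (N : ℝ) := by exact_mod_cast Nat.lt_succ_iff.mp j.isLt
      linarith
    have hδN : δ * ((N:ℝ) + 1) = r / (2 * (‖x‖ + 1)) := by
      rw [hδ]
      field_simp
    have hnn : (0:ℝ) ≤ ‖x‖ := norm_nonneg x
    calc δ * (((j:ℕ) : ℝ) + 1) * ‖x‖ ≤ δ * ((N:ℝ) + 1) * ‖x‖ :=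
          mul_le_mul_of_nonneg_right (mul_le_mul_of_nonneg_left hj hδpos.le) hnn
      _ = r / (2 * (‖x‖ + 1)) * ‖x‖ := by rw [hδN]
      _ < r := by
          rw [div_mul_eq_mul_div, div_lt_iff₀ (by positivity)]
          nlinarith
  have hmem : ∀ j : Fin (N+1),
      (∑ k : Fin (N+1), (tt j) ^ (k : ℕ) • c k) ∈ (⊥ : Submodule F (Unitization F B)) := by
    intro j
    have hball_mem : a + tt j • x ∈ Metric.ball a r := by
      rw [Metric.mem_ball, dist_eq_norm, add_sub_cancel_left]
      exact hsmall j
    have hz : prodSeq (fun _ => a + tt j • x) n₀ = 0 := hball' hball_mem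
    have hzu : ((↑a + tt j • ↑x : Unitization F B)) ^ N = 0 := by
      have h5 : (↑a + tt j • ↑x : Unitization F B) = ((a + tt j • x : B) : Unitization F B) := by
        rw [Unitization.inr_add, Unitization.inr_smul]
      rw [h5, hN, inr_prodSeq_const, hz, Unitization.inr_zero]
    have h6 := hceq (tt j)
    rw [hzu] at h6
    show (∑ k : Fin (N+1), (tt j) ^ (k:ℕ) • c (k:ℕ)) ∈ _
    rw [← Finset.sum_range (fun k => (tt j) ^ k • c k), ← h6]
    exact Submodule.zero_mem _
  have hall := vandermonde_mem tt htt_inj (fun k => c k) ⊥ hmem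
  have htop := hall ⟨N, by omega⟩
  simp only [Submodule.mem_bot] at htop
  have h7 : ((↑x : Unitization F B)) ^ N = 0 := by rw [← hcm]; exact htop
  rw [hN, inr_prodSeq_const] at h7
  exact Unitization.inr_injective (by simpa using h7)

end AnalyticAux

/-- if `A` is a normed PI-algebra over `ℝ` or `ℂ` whose
completion `C(A)` (realized as a Banach algebra `B` containing `A`
isometrically and densely) is nil, then `A` is nilpotent. -/
theorem stmt_12 {F : Type*} [RCLike F] {A B : Type*}
    [NonUnitalNormedRing A] [NormedSpace F A] [IsScalarTower F A A] [SMulCommClass F A A]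
    [NonUnitalNormedRing B] [NormedSpace F B] [IsScalarTower F B B] [SMulCommClass F B B]
    [CompleteSpace B]
    (hPI : ∃ f : FreeNC F, f ≠ 0 ∧ IsPolyId F A f)
    (ι : A →ₙₐ[F] B) (hι : Isometry ι) (hdense : DenseRange ι)
    (hnil : ∀ b : B, ∃ n : ℕ, prodSeq (fun _ => b) n = 0) :
    ∃ N : ℕ, ∀ f : ℕ → A, prodSeq f N = 0 := by
  clear hPI
  obtain ⟨n₀, hB⟩ := uniform_nil_index F hnil
  -- transfer the uniform nil index to A
  have hmap : ∀ (f : ℕ → A) (k : ℕ), ι (prodSeq f k) = prodSeq (fun i => ι (f i)) k := by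
    intro f k
    induction k with
    | zero => rfl
    | succ k ih =>
        show ι (prodSeq f k * f (k+1)) = prodSeq (fun i => ι (f i)) k * ι (f (k+1))
        rw [map_mul, ih]
  have hA : ∀ y : A, prodSeq (fun _ => y) n₀ = 0 := by
    intro y
    apply hι.injective
    rw [hmap, map_zero]
    exact hB (ι y)
  -- pass to the unitization and apply Nagata–Higman
  letI : CharZero F := inferInstance
  set S : Submodule F (Unitization F A) :=
    { carrier := {z : Unitization F A | z.fst = 0}
      add_mem' := by
        intro p q hp hq
        simp only [Set.mem_setOf_eq, Unitization.fst_add] at *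
        rw [hp, hq, add_zero]
      zero_mem' := by simp
      smul_mem' := by
        intro t z hz
        simp only [Set.mem_setOf_eq, Unitization.fst_smul] at *
        rw [hz, smul_zero] } with hS
  have hSmem : ∀ y : A, (↑y : Unitization F A) ∈ S := fun y => by
    show (↑y : Unitization F A).fst = 0
    exact Unitization.fst_inr F y
  have hSl : ∀ r : Unitization F A, ∀ z ∈ S, r * z ∈ S := by
    intro r z hz
    show (r * z).fst = 0
    rw [Unitization.fst_mul, (show z.fst = 0 from hz), mul_zero]
  have hSr : ∀ r : Unitization F A, ∀ z ∈ S, z * r ∈ S := by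
    intro r z hz
    show (z * r).fst = 0
    rw [Unitization.fst_mul, (show z.fst = 0 from hz), zero_mul]
  have hrep : ∀ z : Unitization F A, z ∈ S → z = ↑z.snd := by
    intro z hz
    conv_lhs => rw [← Unitization.inl_fst_add_inr_snd_eq z]
    rw [(show z.fst = 0 from hz), Unitization.inl_zero, zero_add]
  have hKl : ∀ r : Unitization F A, ∀ z ∈ (⊥ : Submodule F (Unitization F A)), r * z ∈ (⊥ : Submodule F (Unitization F A)) := by
    intro r z hz
    rw [Submodule.mem_bot] at hz ⊢
    rw [hz, mul_zero]
  have hKr : ∀ r : Unitization F A, ∀ z ∈ (⊥ : Submodule F (Unitization F A)), z * r ∈ (⊥ : Submodule F (Unitization F A)) := by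
    intro r z hz
    rw [Submodule.mem_bot] at hz ⊢
    rw [hz, zero_mul]
  have hpow : ∀ z ∈ S, z ^ (n₀ + 1) ∈ (⊥ : Submodule F (Unitization F A)) := by
    intro z hz
    rw [Submodule.mem_bot, hrep z hz, inr_prodSeq_const, hA z.snd, Unitization.inr_zero]
  have h2N : 2 ≤ 2 ^ (n₀ + 1) := by
    calc 2 = 2 ^ 1 := (pow_one 2).symm
      _ ≤ 2 ^ (n₀ + 1) := Nat.pow_le_pow_right (by norm_num) (by omega)
  refine ⟨2 ^ (n₀ + 1) - 2, fun f => ?_⟩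
  have hlp : ∀ k : ℕ,
      ((List.range (k+1)).map (fun i => (↑(f i) : Unitization F A))).prod
        = ↑(prodSeq f k) := by
    intro k
    induction k with
    | zero =>
        show (List.map (fun i => ((f i : A) : Unitization F A)) [0]).prod = ↑(f 0)
        simp [prodSeq]
    | succ k ih =>
        rw [List.range_succ, List.map_append, List.prod_append, ih]
        show (↑(prodSeq f k) : Unitization F A) * ((↑(f (k+1)) : Unitization F A) * 1)
            = ↑(prodSeq f k * f (k+1))
        rw [mul_one, Unitization.inr_mul]
  set L : List (Unitization F A) :=
    (List.range (2 ^ (n₀+1) - 1)).map (fun i => (↑(f i) : Unitization F A)) with hL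
  have hlen : L.length = 2 ^ (n₀+1) - 1 := by
    rw [hL, List.length_map, List.length_range]
  have hmem : ∀ z ∈ L, z ∈ S := by
    intro z hzl
    rw [hL, List.mem_map] at hzl
    obtain ⟨i, _, rfl⟩ := hzl
    exact hSmem (f i)
  have hprod := nagata_higman S hSl hSr (n₀+1) ⊥ hKl hKr hpow L hmem hlen
  rw [Submodule.mem_bot] at hprod
  have h8 : 2 ^ (n₀+1) - 1 = (2 ^ (n₀+1) - 2) + 1 := by omega
  rw [hL, h8, hlp] at hprod
  exact Unitization.inr_injective (by simpa using hprod)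
end
end

section
/- Let F⟨X⟩ carry a multihomogeneous algebra norm and let A be a PI-algebra over F = ℝ or ℂ. If the completion of the normed algebra F⟨X⟩/Id(A) is nil, then A is nilpotent. -/
open Filter Topology

noncomputable section

/-! ### Auxiliary machinery -/

section Vanish

variable {F : Type*} [RCLike F]

/-- A module-valued polynomial vanishing on an infinite set has zero coefficients. -/
lemma poly_vanish {M : Type*} [AddCommGroup M] [Module F M] {d : ℕ} {c : ℕ → M}
    {S : Set F} (hS : S.Infinite)
    (h : ∀ t ∈ S, ∑ k ∈ Finset.range d, t ^ k • c k = 0) :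
    ∀ k < d, c k = 0 := by
  intro k hk
  rw [← Module.forall_dual_apply_eq_zero_iff F (c k)]
  intro φ
  set p : Polynomial F := ∑ j ∈ Finset.range d, Polynomial.monomial j (φ (c j)) with hp
  have hroots : S ⊆ {x | p.IsRoot x} := by
    intro t ht
    have h2 := congrArg φ (h t ht)
    simp only [map_sum, map_smul, map_zero, smul_eq_mul] at h2
    simp only [Set.mem_setOf_eq, Polynomial.IsRoot, hp, Polynomial.eval_finset_sum,
      Polynomial.eval_monomial]
    calc ∑ j ∈ Finset.range d, φ (c j) * t ^ j
        = ∑ j ∈ Finset.range d, t ^ j * φ (c j) := by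
          exact Finset.sum_congr rfl fun j _ => mul_comm _ _
      _ = 0 := h2
  have hp0 : p = 0 := Polynomial.eq_zero_of_infinite_isRoot p (hS.mono hroots)
  have hcoeff : p.coeff k = φ (c k) := by
    rw [hp, Polynomial.finset_sum_coeff]
    simp only [Polynomial.coeff_monomial]
    rw [Finset.sum_ite_eq' (Finset.range d) k (fun j => φ (c j))]
    simp [Finset.mem_range.mpr hk]
  rw [← hcoeff, hp0, Polynomial.coeff_zero]

/-- Membership version: coefficients of a polynomial with values in a submodule. -/
lemma poly_vanish_mem {M : Type*} [AddCommGroup M] [Module F M] {W : Submodule F M}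
    {d : ℕ} {c : ℕ → M} {S : Set F} (hS : S.Infinite)
    (h : ∀ t ∈ S, (∑ k ∈ Finset.range d, t ^ k • c k) ∈ W) :
    ∀ k < d, c k ∈ W := by
  intro k hk
  have h' : ∀ t ∈ S, ∑ j ∈ Finset.range d, t ^ j • W.mkQ (c j) = 0 := by
    intro t ht
    have hsum : ∑ j ∈ Finset.range d, t ^ j • W.mkQ (c j)
        = W.mkQ (∑ j ∈ Finset.range d, t ^ j • c j) := by
      rw [map_sum]
      exact Finset.sum_congr rfl fun j _ => (map_smul _ _ _).symm
    rw [hsum, Submodule.mkQ_apply, Submodule.Quotient.mk_eq_zero]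
    exact h t ht
  have := poly_vanish hS h' k hk
  exact (Submodule.Quotient.mk_eq_zero W).mp this

end Vanish

section CoeffE

variable {F : Type*} [RCLike F] {R : Type*} [Ring R] [Algebra F R]

/-- Coefficients of the expansion of `(z + t • q) ^ μ` in powers of `t`. -/
def coeffE (z q : R) : ℕ → ℕ → R
  | 0, 0 => 1
  | 0, _+1 => 0
  | μ+1, 0 => coeffE z q μ 0 * z
  | μ+1, k+1 => coeffE z q μ (k+1) * z + coeffE z q μ k * q

lemma coeffE_zero (z q : R) (μ : ℕ) : coeffE z q μ 0 = z ^ μ := by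
  induction μ with
  | zero => simp [coeffE]
  | succ μ ih => rw [coeffE, ih, pow_succ]

lemma coeffE_gt (z q : R) {μ k : ℕ} (h : μ < k) : coeffE z q μ k = 0 := by
  induction μ generalizing k with
  | zero => obtain ⟨k, rfl⟩ : ∃ j, k = j + 1 := ⟨k - 1, by omega⟩; rfl
  | succ μ ih =>
      obtain ⟨k, rfl⟩ : ∃ j, k = j + 1 := ⟨k - 1, by omega⟩
      rw [coeffE, ih (by omega), ih (by omega), zero_mul, zero_mul, add_zero]

lemma coeffE_diag (z q : R) (μ : ℕ) : coeffE z q μ μ = q ^ μ := by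
  induction μ with
  | zero => simp [coeffE]
  | succ μ ih => rw [coeffE, ih, coeffE_gt z q (by omega), zero_mul, zero_add, pow_succ]

lemma coeffE_one (z q : R) (μ : ℕ) :
    coeffE z q μ 1 = ∑ i ∈ Finset.range μ, z ^ i * q * z ^ (μ - 1 - i) := by
  induction μ with
  | zero => simp [coeffE]
  | succ μ ih =>
      rw [coeffE, ih, coeffE_zero, Finset.sum_range_succ, Finset.sum_mul]
      congr 1
      · refine Finset.sum_congr rfl fun i hi => ?_
        rw [Finset.mem_range] at hi
        rw [mul_assoc, mul_assoc, ← pow_succ, show μ - 1 - i + 1 = μ + 1 - 1 - i from by omega,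
          ← mul_assoc]
      · rw [show μ + 1 - 1 - μ = 0 from by omega, pow_zero, mul_one]

lemma expandPow (z q : R) (t : F) (μ : ℕ) :
    (z + t • q) ^ μ = ∑ k ∈ Finset.range (μ + 1), t ^ k • coeffE z q μ k := by
  induction μ with
  | zero => simp [coeffE]
  | succ μ ih =>
      rw [pow_succ, ih, Finset.sum_mul]
      have hterm : ∀ k, (t ^ k • coeffE z q μ k) * (z + t • q)
          = t ^ k • (coeffE z q μ k * z) + t ^ (k + 1) • (coeffE z q μ k * q) := by
        intro k
        rw [mul_add, smul_mul_assoc, smul_mul_assoc, mul_smul_comm, smul_smul, ← pow_succ]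
      rw [Finset.sum_congr rfl fun k _ => hterm k, Finset.sum_add_distrib]
      have h1 : ∑ k ∈ Finset.range (μ + 1), t ^ k • (coeffE z q μ k * z)
          = ∑ k ∈ Finset.range (μ + 2), t ^ k • (coeffE z q μ k * z) := by
        rw [Finset.sum_range_succ (n := μ + 1), coeffE_gt z q (by omega), zero_mul,
          smul_zero, add_zero]
      have h2 : ∑ k ∈ Finset.range (μ + 1), t ^ (k + 1) • (coeffE z q μ k * q)
          = ∑ k ∈ Finset.range (μ + 2),
              t ^ k • (if k = 0 then 0 else coeffE z q μ (k - 1) * q) := by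
        rw [Finset.sum_range_succ' (fun k =>
          t ^ k • (if k = 0 then 0 else coeffE z q μ (k - 1) * q)) (μ + 1)]
        simp
      rw [h1, h2, ← Finset.sum_add_distrib]
      refine Finset.sum_congr rfl fun k _ => ?_
      rw [← smul_add]
      congr 1
      cases k with
      | zero => rw [if_pos rfl, add_zero]; rfl
      | succ k => rw [if_neg (Nat.succ_ne_zero _), Nat.add_sub_cancel]; rfl

end CoeffE

section NagataHigman

variable {F : Type*} [RCLike F] {R : Type*} [Ring R] [Algebra F R]

/-- The two-sided ideal (as a submodule) generated by `m`-th powers of elements of `S`. -/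
def idealPow (m : ℕ) (S : Submodule F R) : Submodule F R :=
  Submodule.span F {r | ∃ x ∈ S, ∃ u v : R, r = u * x ^ m * v}

lemma idealPow_mul_left {m : ℕ} {S : Submodule F R} (r : R) {a : R}
    (ha : a ∈ idealPow m S) : r * a ∈ idealPow m S := by
  induction ha using Submodule.span_induction with
  | mem w hw =>
      obtain ⟨x, hx, u, v, rfl⟩ := hw
      exact Submodule.subset_span ⟨x, hx, r * u, v, by rw [mul_assoc, mul_assoc, mul_assoc]⟩
  | zero => rw [mul_zero]; exact Submodule.zero_mem _
  | add b c _ _ hb hc => rw [mul_add]; exact Submodule.add_mem _ hb hc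
  | smul c b _ hb => rw [mul_smul_comm]; exact Submodule.smul_mem _ _ hb

lemma idealPow_mul_right {m : ℕ} {S : Submodule F R} {a : R}
    (ha : a ∈ idealPow m S) (r : R) : a * r ∈ idealPow m S := by
  induction ha using Submodule.span_induction with
  | mem w hw =>
      obtain ⟨x, hx, u, v, rfl⟩ := hw
      exact Submodule.subset_span ⟨x, hx, u, v * r, by rw [mul_assoc, mul_assoc]⟩
  | zero => rw [zero_mul]; exact Submodule.zero_mem _
  | add b c _ _ hb hc => rw [add_mul]; exact Submodule.add_mem _ hb hc
  | smul c b _ hb => rw [smul_mul_assoc]; exact Submodule.smul_mem _ _ hb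

lemma coeffE_mem {S : Submodule F R} {x q : R} (hx : x ∈ S) (hq : q ∈ S) (m k : ℕ)
    (hk : k < m + 1) : coeffE x q m k ∈ idealPow m S := by
  refine poly_vanish_mem (S := (Set.univ : Set F)) Set.infinite_univ (fun t _ => ?_) k hk
  rw [← expandPow]
  exact Submodule.subset_span
    ⟨x + t • q, S.add_mem hx (S.smul_mem t hq), 1, 1, by rw [one_mul, mul_one]⟩

lemma T_mem {S : Submodule F R} {x q : R} (hx : x ∈ S) (hq : q ∈ S) (m : ℕ) :
    (∑ i ∈ Finset.range (m + 1), x ^ i * q * x ^ (m - i)) ∈ idealPow (m + 1) S := by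
  have h := coeffE_mem hx hq (m + 1) 1 (by omega)
  rw [coeffE_one] at h
  simpa using h

/-- Higman's key lemma: `x^m * w * y^m` lies in the ideal generated by `(m+1)`-st powers. -/
lemma higman_lemma {S : Submodule F R}
    (hSl : ∀ r : R, ∀ s ∈ S, r * s ∈ S) (hSr : ∀ r : R, ∀ s ∈ S, s * r ∈ S)
    {x y w : R} (hx : x ∈ S) (hy : y ∈ S) (hw : w ∈ S) (m : ℕ) :
    x ^ m * w * y ^ m ∈ idealPow (m + 1) S := by
  set J := idealPow (m + 1) S with hJ
  set X := x ^ m * w * y ^ m with hX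
  -- the three families of relations
  have relI : (∑ j ∈ Finset.range m,
      (∑ i ∈ Finset.range (m + 1), x ^ i * (w * y ^ j) * x ^ (m - i)) * y ^ (m - j)) ∈ J :=
    Submodule.sum_mem _ fun j _ =>
      idealPow_mul_right (T_mem hx (hSr (y ^ j) w hw) m) _
  have relII : (∑ i ∈ Finset.range m,
      (x ^ i * w) * (∑ j ∈ Finset.range (m + 1), y ^ j * x ^ (m - i) * y ^ (m - j))) ∈ J := by
    refine Submodule.sum_mem _ fun i hi => idealPow_mul_left _ (T_mem hy ?_ m)
    rw [Finset.mem_range] at hi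
    have : x ^ (m - i) = x ^ (m - i - 1) * x := by
      rw [← pow_succ]; congr 1; omega
    rw [this]
    exact hSl _ x hx
  have relIII : (∑ i ∈ Finset.range (m + 1), x ^ i * (w * y ^ m) * x ^ (m - i)) ∈ J :=
    T_mem hx (hSr (y ^ m) w hw) m
  -- the identity
  have key : (∑ j ∈ Finset.range m,
        (∑ i ∈ Finset.range (m + 1), x ^ i * (w * y ^ j) * x ^ (m - i)) * y ^ (m - j))
      - (∑ i ∈ Finset.range m,
        (x ^ i * w) * (∑ j ∈ Finset.range (m + 1), y ^ j * x ^ (m - i) * y ^ (m - j)))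
      + (∑ i ∈ Finset.range (m + 1), x ^ i * (w * y ^ m) * x ^ (m - i))
      = (m + 1) • X := by
    have e1 : ∀ j ∈ Finset.range m,
        (∑ i ∈ Finset.range (m + 1), x ^ i * (w * y ^ j) * x ^ (m - i)) * y ^ (m - j)
        = (∑ i ∈ Finset.range m, x ^ i * (w * y ^ j) * x ^ (m - i) * y ^ (m - j)) + X := by
      intro j hj
      rw [Finset.mem_range] at hj
      rw [Finset.sum_mul, Finset.sum_range_succ]
      congr 1
      have hy : (y : R) ^ j * y ^ (m - j) = y ^ m := by
        rw [← pow_add]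
        congr 1
        omega
      rw [Nat.sub_self, pow_zero, mul_one, hX, mul_assoc, mul_assoc, hy, ← mul_assoc]
    have e2 : ∀ i ∈ Finset.range m,
        (x ^ i * w) * (∑ j ∈ Finset.range (m + 1), y ^ j * x ^ (m - i) * y ^ (m - j))
        = (∑ j ∈ Finset.range m, x ^ i * (w * y ^ j) * x ^ (m - i) * y ^ (m - j))
          + x ^ i * (w * y ^ m) * x ^ (m - i) := by
      intro i _
      rw [Finset.mul_sum, Finset.sum_range_succ]
      congr 1
      · refine Finset.sum_congr rfl fun j _ => by
          simp only [mul_assoc]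
      · rw [Nat.sub_self, pow_zero, mul_one]
        simp only [mul_assoc]
    have hsc : ∑ j ∈ Finset.range m, ∑ i ∈ Finset.range m,
          x ^ i * (w * y ^ j) * x ^ (m - i) * y ^ (m - j)
        = ∑ i ∈ Finset.range m, ∑ j ∈ Finset.range m,
          x ^ i * (w * y ^ j) * x ^ (m - i) * y ^ (m - j) := Finset.sum_comm
    have hXeq : x ^ m * (w * y ^ m) = X := by rw [hX, mul_assoc]
    rw [Finset.sum_congr rfl e1, Finset.sum_congr rfl e2, Finset.sum_add_distrib,
      Finset.sum_add_distrib, Finset.sum_range_succ (n := m), Nat.sub_self, pow_zero, mul_one]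
    rw [Finset.sum_const, Finset.card_range, hsc, hXeq, succ_nsmul]
    abel
  have hmem : (m + 1) • X ∈ J := by
    rw [← key]
    exact Submodule.add_mem _ (Submodule.sub_mem _ relI relII) relIII
  have hcast : (((m : ℕ) + 1 : ℕ) : F) • X ∈ J := by
    rw [Nat.cast_smul_eq_nsmul]; exact hmem
  have := J.smul_mem ((((m : ℕ) + 1 : ℕ) : F))⁻¹ hcast
  rwa [inv_smul_smul₀ (by exact_mod_cast Nat.succ_ne_zero m)] at this

/-- Products `f 0 * f 1 * ⋯ * f (k-1)` in a unital ring (empty product is `1`). -/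
def uprod (f : ℕ → R) : ℕ → R
  | 0 => 1
  | k+1 => uprod f k * f k

lemma uprod_add (f : ℕ → R) (a b : ℕ) :
    uprod f (a + b) = uprod f a * uprod (fun i => f (a + i)) b := by
  induction b with
  | zero => simp [uprod]
  | succ b ih => rw [← Nat.add_assoc, uprod, uprod, ih, mul_assoc]

lemma sandwich {m : ℕ} {S : Submodule F R}
    (hSl : ∀ r : R, ∀ s ∈ S, r * s ∈ S) (hSr : ∀ r : R, ∀ s ∈ S, s * r ∈ S)
    {c : R} (hc : c ∈ S) {p₁ p₂ : R} (h₁ : p₁ ∈ idealPow m S) (h₂ : p₂ ∈ idealPow m S) :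
    p₁ * c * p₂ ∈ idealPow (m + 1) S := by
  induction h₁ using Submodule.span_induction with
  | mem w hw =>
      obtain ⟨x, hx, u, v, rfl⟩ := hw
      induction h₂ using Submodule.span_induction with
      | mem w' hw' =>
          obtain ⟨x', hx', u', v', rfl⟩ := hw'
          have hmid : v * c * u' ∈ S := hSr u' _ (hSl v c hc)
          have hcore := higman_lemma hSl hSr hx hx' hmid m
          have := idealPow_mul_left u (idealPow_mul_right hcore v')
          convert this using 1
          simp only [mul_assoc]
      | zero => rw [mul_zero]; exact Submodule.zero_mem _
      | add b d _ _ hb hd => rw [mul_add]; exact Submodule.add_mem _ hb hd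
      | smul t b _ hb => rw [mul_smul_comm]; exact Submodule.smul_mem _ _ hb
  | zero => rw [zero_mul, zero_mul]; exact Submodule.zero_mem _
  | add b d _ _ hb hd => rw [add_mul, add_mul]; exact Submodule.add_mem _ hb hd
  | smul t b _ hb => rw [smul_mul_assoc, smul_mul_assoc]; exact Submodule.smul_mem _ _ hb

/-- Quotient-free Nagata–Higman induction. -/
theorem nh_aux (m : ℕ) {S : Submodule F R}
    (hSl : ∀ r : R, ∀ s ∈ S, r * s ∈ S) (hSr : ∀ r : R, ∀ s ∈ S, s * r ∈ S) :
    ∀ f : ℕ → R, (∀ i, f i ∈ S) → uprod f (2 ^ m - 1) ∈ idealPow m S := by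
  induction m with
  | zero =>
      intro f _
      exact Submodule.subset_span ⟨0, S.zero_mem, 1, 1, by simp [uprod]⟩
  | succ m ih =>
      intro f hf
      have h2 : 1 ≤ 2 ^ m := Nat.one_le_two_pow
      have hsplit : 2 ^ (m + 1) - 1 = ((2 ^ m - 1) + 1) + (2 ^ m - 1) := by
        rw [pow_succ]; omega
      rw [hsplit, uprod_add, uprod]
      exact sandwich hSl hSr (hf _) (ih f hf) (ih _ fun i => hf _)

end NagataHigman

section Transfer

variable {F : Type*} [RCLike F]

lemma map_prodSeq {A₁ A₂ : Type*} [NonUnitalNonAssocSemiring A₁] [NonUnitalNonAssocSemiring A₂]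
    [Module F A₁] [Module F A₂] (φ : A₁ →ₙₐ[F] A₂) (f : ℕ → A₁) (n : ℕ) :
    φ (prodSeq f n) = prodSeq (fun i => φ (f i)) n := by
  induction n with
  | zero => rfl
  | succ n ih => rw [prodSeq, map_mul, ih]; rfl

variable {A : Type*} [NonUnitalRing A] [Module F A] [IsScalarTower F A A] [SMulCommClass F A A]

lemma inr_prodSeq_const_s13 (a : A) (n : ℕ) :
    (↑(prodSeq (fun _ => a) n) : Unitization F A) = (↑a : Unitization F A) ^ (n + 1) := by
  induction n with
  | zero => rw [pow_one]; rfl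
  | succ n ih => rw [prodSeq, pow_succ, ← ih, Unitization.inr_mul]

lemma inr_prodSeq (f : ℕ → A) (n : ℕ) :
    (↑(prodSeq f n) : Unitization F A) = uprod (fun i => (↑(f i) : Unitization F A)) (n + 1) := by
  induction n with
  | zero => rw [uprod, uprod, one_mul]; rfl
  | succ n ih => rw [prodSeq, uprod, ← ih, Unitization.inr_mul]

end Transfer

/-- if `F⟨X⟩` carries a multihomogeneous algebra norm, `A` is a
PI-algebra, and the completion `B` of the normed algebra `F⟨X⟩ / Id(A)`
(realized by a quotient map `π` onto `Q` with the quotient norm, and a Banach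
algebra `B ⊇ Q` isometrically and densely) is nil, then `A` is nilpotent. -/
theorem stmt_13 {F : Type*} [RCLike F] [NormedAddCommGroup (FreeNC F)]
    (hsub : ∀ f g : FreeNC F, ‖f * g‖ ≤ ‖f‖ * ‖g‖)
    (hhom : ∀ (c : F) (f : FreeNC F), ‖c • f‖ = ‖c‖ * ‖f‖)
    (hmh : ∀ (d : ℕ →₀ ℕ) (f : FreeNC F), ‖component d f‖ ≤ ‖f‖)
    {A : Type*} [NonUnitalRing A] [Module F A] [IsScalarTower F A A] [SMulCommClass F A A]
    (hPI : ∃ f : FreeNC F, f ≠ 0 ∧ IsPolyId F A f)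
    {Q : Type*} [NonUnitalNormedRing Q] [NormedSpace F Q]
    [IsScalarTower F Q Q] [SMulCommClass F Q Q]
    (π : FreeNC F →ₙₐ[F] Q) (hsurj : Function.Surjective π)
    (hker : ∀ f : FreeNC F, π f = 0 ↔ IsPolyId F A f)
    (hqnorm : ∀ f : FreeNC F,
      ‖π f‖ = sInf ((fun g => ‖f + g‖) '' {g : FreeNC F | IsPolyId F A g}))
    {B : Type*} [NonUnitalNormedRing B] [NormedSpace F B]
    [IsScalarTower F B B] [SMulCommClass F B B] [CompleteSpace B]
    (ι : Q →ₙₐ[F] B) (hι : Isometry ι) (hdense : DenseRange ι)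
    (hnil : ∀ b : B, ∃ n : ℕ, prodSeq (fun _ => b) n = 0) :
    ∃ N : ℕ, ∀ f : ℕ → A, prodSeq f N = 0 := by
  classical
  -- Step 1 (Grabiner/Baire): `B` has bounded nil index.
  obtain ⟨n₀, hbound⟩ : ∃ n : ℕ, ∀ b : B, prodSeq (fun _ => b) n = 0 := by
    have hcl : ∀ n : ℕ, IsClosed {b : B | prodSeq (fun _ => b) n = 0} := by
      intro n
      have hcont : Continuous fun b : B => prodSeq (fun _ => b) n := by
        induction n with
        | zero => exact continuous_id
        | succ n ih => exact ih.mul continuous_id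
      exact isClosed_singleton.preimage hcont
    have hU : (⋃ n : ℕ, {b : B | prodSeq (fun _ => b) n = 0}) = Set.univ := by
      ext b
      simp only [Set.mem_iUnion, Set.mem_setOf_eq, Set.mem_univ, iff_true]
      exact hnil b
    have : Nonempty B := ⟨0⟩
    obtain ⟨n, hn⟩ := nonempty_interior_of_iUnion_of_closed hcl hU
    obtain ⟨b₀, hb₀⟩ := hn
    obtain ⟨ε, hε, hball⟩ := Metric.isOpen_iff.mp isOpen_interior b₀ hb₀
    have hball' : ∀ b ∈ Metric.ball b₀ ε, prodSeq (fun _ => b) n = 0 := by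
      intro b hb
      have h1 : b ∈ interior {b : B | prodSeq (fun _ => b) n = 0} := hball hb
      have h2 : interior {b : B | prodSeq (fun _ => b) n = 0}
          ⊆ {b : B | prodSeq (fun _ => b) n = 0} := interior_subset
      exact h2 h1
    refine ⟨n, fun a => ?_⟩
    set δ : ℝ := ε / (‖a‖ + 1) with hδdef
    have hδpos : 0 < δ := div_pos hε (by positivity)
    have hSinf : ({t : F | ‖t‖ < δ}).Infinite := by
      have h1 : (Set.Ioo (0:ℝ) δ).Infinite := Set.infinite_coe_iff.mp (Set.Ioo.infinite hδpos)
      have hinj : Set.InjOn (fun r : ℝ => ((r : F))) (Set.Ioo (0:ℝ) δ) :=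
        fun r _ s _ h => RCLike.ofReal_inj.mp h
      refine (h1.image hinj).mono ?_
      rintro t ⟨r, hr, rfl⟩
      simp only [Set.mem_setOf_eq, RCLike.norm_ofReal]
      rw [abs_of_pos hr.1]
      exact hr.2
    have hzero : ∀ t ∈ {t : F | ‖t‖ < δ},
        ((↑b₀ : Unitization F B) + t • (↑a : Unitization F B)) ^ (n + 1) = 0 := by
      intro t ht
      have hmem : b₀ + t • a ∈ Metric.ball b₀ ε := by
        rw [Metric.mem_ball, dist_eq_norm, add_sub_cancel_left, norm_smul]
        calc ‖t‖ * ‖a‖ ≤ ‖t‖ * (‖a‖ + 1) := by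
              exact mul_le_mul_of_nonneg_left (by linarith) (norm_nonneg t)
          _ < δ * (‖a‖ + 1) := by
              exact mul_lt_mul_of_pos_right ht (by positivity)
          _ = ε := by rw [hδdef, div_mul_cancel₀]; positivity
      have h0 : prodSeq (fun _ => b₀ + t • a) n = 0 := hball' _ hmem
      have h1 : ((↑(b₀ + t • a) : Unitization F B)) ^ (n + 1) = 0 := by
        rw [← inr_prodSeq_const_s13 (F := F), h0, Unitization.inr_zero]
      rw [Unitization.inr_add, Unitization.inr_smul] at h1
      exact h1
    have hvan : ∀ t ∈ {t : F | ‖t‖ < δ}, ∑ k ∈ Finset.range (n + 2),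
        t ^ k • coeffE (↑b₀ : Unitization F B) (↑a : Unitization F B) (n + 1) k = 0 := by
      intro t ht
      rw [← expandPow]
      exact hzero t ht
    have htop := poly_vanish hSinf hvan (n + 1) (by omega)
    rw [coeffE_diag] at htop
    have : (↑(prodSeq (fun _ => a) n) : Unitization F B) = 0 := by
      rw [inr_prodSeq_const_s13 (F := F) a n, htop]
    exact Unitization.inr_injective (by simpa using this)
  -- Step 2: transfer the bounded nil index to `A`.
  have hnilA : ∀ a : A, prodSeq (fun _ => a) n₀ = 0 := by
    set s : FreeNC F := MonoidAlgebra.single (FreeSemigroup.of 0) (1 : F) with hs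
    have hBzero : prodSeq (fun _ => ι (π s)) n₀ = 0 := hbound _
    have hι0 : ι (prodSeq (fun _ => π s) n₀) = 0 := by
      rw [map_prodSeq]; exact hBzero
    have hQ0 : prodSeq (fun _ => π s) n₀ = 0 := by
      apply hι.injective
      rw [hι0, map_zero]
    have hπ0 : π (prodSeq (fun _ => s) n₀) = 0 := by
      rw [map_prodSeq]; exact hQ0
    have hid : IsPolyId F A (prodSeq (fun _ => s) n₀) := (hker _).mp hπ0
    intro a
    have h1 := hid (fun _ => a)
    rw [map_prodSeq] at h1
    have hsa : evalAt (fun _ : ℕ => a) s = a := by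
      rw [hs, evalAt, MonoidAlgebra.liftMagma_apply_apply]
      simp only [AddMonoidHom.toFun_eq_coe, AddMonoidHom.coe_comp, Function.comp_apply, AddEquiv.toAddMonoidHom_eq_coe, AddMonoidHom.coe_coe, MonoidAlgebra.coeffAddEquiv_apply, MonoidAlgebra.coeff_single, Finsupp.liftAddHom_apply, Finsupp.sum_single_index, AddMonoidHom.flip_apply, smulAddHom_apply, zero_smul]
      rw [one_smul, FreeSemigroup.lift_of]
    simpa [hsa] using h1
  -- Step 3: Nagata–Higman in `A` via the unitization.
  refine ⟨2 ^ (n₀ + 1) - 2, fun f => ?_⟩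
  set S : Submodule F (Unitization F A) :=
    { carrier := {x : Unitization F A | x.fst = 0}
      add_mem' := fun {a b} ha hb => by
        simp only [Set.mem_setOf_eq, Unitization.fst_add] at *
        rw [ha, hb, add_zero]
      zero_mem' := by simp
      smul_mem' := fun c x hx => by
        simp only [Set.mem_setOf_eq, Unitization.fst_smul] at *
        rw [hx, smul_zero] } with hSdef
  have hmemS : ∀ x : Unitization F A, x ∈ S ↔ x.fst = 0 := fun x => Iff.rfl
  have hSl : ∀ r : Unitization F A, ∀ s ∈ S, r * s ∈ S := by
    intro r s hsmem
    rw [hmemS] at *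
    rw [Unitization.fst_mul, hsmem, mul_zero]
  have hSr : ∀ r : Unitization F A, ∀ s ∈ S, s * r ∈ S := by
    intro r s hsmem
    rw [hmemS] at *
    rw [Unitization.fst_mul, hsmem, zero_mul]
  have hSinr : ∀ x, x ∈ S → ∃ a : A, x = (↑a : Unitization F A) := by
    intro x hx
    refine ⟨x.snd, ?_⟩
    rw [hmemS] at hx
    conv_lhs => rw [← Unitization.inl_fst_add_inr_snd_eq x]
    rw [hx, Unitization.inl_zero, zero_add]
  have hnilS : ∀ x ∈ S, x ^ (n₀ + 1) = 0 := by
    intro x hx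
    obtain ⟨a, rfl⟩ := hSinr x hx
    rw [← inr_prodSeq_const_s13 (F := F) a n₀, hnilA a, Unitization.inr_zero]
  have hbot : idealPow (n₀ + 1) S ≤ ⊥ := by
    rw [idealPow, Submodule.span_le]
    rintro r ⟨x, hx, u, v, rfl⟩
    rw [hnilS x hx, mul_zero, zero_mul]
    exact Submodule.zero_mem ⊥
  have hfS : ∀ i, (↑(f i) : Unitization F A) ∈ S := by
    intro i
    rw [hmemS, Unitization.fst_inr]
  have hmain := nh_aux (n₀ + 1) hSl hSr (fun i => (↑(f i) : Unitization F A)) hfS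
  have hzero : uprod (fun i => (↑(f i) : Unitization F A)) (2 ^ (n₀ + 1) - 1) = 0 := by
    have := hbot hmain
    simpa using this
  have h2 : (2:ℕ) ≤ 2 ^ (n₀ + 1) := by
    calc (2:ℕ) = 2 ^ 1 := rfl
    _ ≤ 2 ^ (n₀ + 1) := Nat.pow_le_pow_right (by omega) (by omega)
  have hcount : 2 ^ (n₀ + 1) - 2 + 1 = 2 ^ (n₀ + 1) - 1 := by omega
  have : (↑(prodSeq f (2 ^ (n₀ + 1) - 2)) : Unitization F A) = 0 := by
    rw [inr_prodSeq (F := F), hcount, hzero]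
  exact Unitization.inr_injective (by simpa using this)
end
end
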